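/- arXiv:2507.10068 — 4 statements merged into one kernel-verified Lean document; each statement's English description precedes it below -/
import Mathlib

section
/- For m ≥ 2 and 1 ≤ w ≤ m−1, the submatrix G_{m,w} of A₃^{⊗m} consisting of all rows of Hamming weight 2^w·3^{m−w} equals, up to row permutation, the vertical concatenation of (1,1,1) ⊗ G_{m−1,w}, (1,1,0) ⊗ G_{m−1,w−1}, and (1,0,1) ⊗ G_{m−1,w−1}. -/
open Finset

abbrev F2 := ZMod 2
abbrev F4 := GaloisField 2 2

def A3 : Matrix (ZMod 3) (ZMod 3) F2 := !![1,1,1; 1,1,0; 1,0,1]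

/-- The `m`-fold Kronecker power of `A3`, with rows and columns indexed by `Fin m → ZMod 3`. -/
def A3pow (m : ℕ) : Matrix (Fin m → ZMod 3) (Fin m → ZMod 3) F2 :=
  fun r c => ∏ i, A3 (r i) (c i)

/-- The DFT coefficient at frequency `j` as an `F2`-linear functional. -/
noncomputable def dftL (m : ℕ) (α : F4) (j : Fin m → ZMod 3) :
    ((Fin m → ZMod 3) → F2) →ₗ[F2] F4 :=
  ∑ i : Fin m → ZMod 3,
    α ^ (∑ l, i l * j l).val • ((Algebra.linearMap F2 F4).comp (LinearMap.proj i))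

/-- The abelian code with frequency weight set `W`. -/
noncomputable def abelianCode (m : ℕ) (α : F4) (W : Finset ℕ) :
    Submodule F2 ((Fin m → ZMod 3) → F2) :=
  ⨅ j ∈ {j : Fin m → ZMod 3 | hammingNorm j ∉ W}, LinearMap.ker (dftL m α j)

/-- The BiD code as the span of the rows of `A3pow m` with weight in the prescribed range. -/
noncomputable def BiD (m r₁ r₂ : ℕ) : Submodule F2 ((Fin m → ZMod 3) → F2) :=
  Submodule.span F2 {a | ∃ r, (2^r₂ * 3^(m-r₂) ≤ hammingNorm (A3pow m r) ∧
    hammingNorm (A3pow m r) ≤ 2^r₁ * 3^(m-r₁)) ∧ a = A3pow m r}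

/-- Minimum distance of a linear code. -/
noncomputable def minDist {m : ℕ} (C : Submodule F2 ((Fin m → ZMod 3) → F2)) : ℕ :=
  sInf {d : ℕ | ∃ a ∈ C, a ≠ 0 ∧ hammingNorm a = d}

lemma A3pow_succ (m : ℕ) (r c : Fin (m+1) → ZMod 3) :
    A3pow (m+1) r c = A3 (r 0) (c 0) * A3pow m (Fin.tail r) (Fin.tail c) := by
  simpa [A3pow, Fin.tail] using Fin.prod_univ_succ (fun i => A3 (r i) (c i))

lemma hammingNorm_A3_row (i : ZMod 3) : hammingNorm (A3 i) = if i = 0 then 3 else 2 := by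
  fin_cases i <;> decide

lemma key_count (m : ℕ) (f : ZMod 3 → F2) (g : (Fin m → ZMod 3) → F2) :
    hammingNorm (fun c : Fin (m+1) → ZMod 3 => f (c 0) * g (Fin.tail c)) =
      hammingNorm f * hammingNorm g := by
  classical
  simp only [hammingNorm, ← Fintype.card_subtype, ← Fintype.card_prod]
  apply Fintype.card_congr
  exact
  { toFun := fun c => (⟨c.1 0, fun h => c.2 (by simp [h])⟩,
      ⟨Fin.tail c.1, fun h => c.2 (by simp [h])⟩)
    invFun := fun p => ⟨Fin.cons p.1.1 p.2.1, by
      simpa using mul_ne_zero p.1.2 p.2.2⟩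
    left_inv := fun c => by
      ext : 1
      exact Fin.cons_self_tail c.1
    right_inv := fun p => by
      ext : 2 <;> simp }

lemma norm_cons (m : ℕ) (a : ZMod 3) (t : Fin m → ZMod 3) :
    hammingNorm (Fin.cons a t : Fin (m+1) → ZMod 3) =
      (if a ≠ 0 then 1 else 0) + hammingNorm t := by
  classical
  simp [hammingNorm, Finset.card_filter, Fin.sum_univ_succ]

lemma norm_le (m : ℕ) (t : Fin m → ZMod 3) : hammingNorm t ≤ m := by
  classical
  simpa [hammingNorm] using Finset.card_filter_le Finset.univ (fun i => t i ≠ 0)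

lemma norm_A3pow (m : ℕ) (r : Fin m → ZMod 3) :
    hammingNorm (A3pow m r) = 2 ^ hammingNorm r * 3 ^ (m - hammingNorm r) := by
  induction m with
  | zero =>
    have h0 : hammingNorm r = 0 := by simp [hammingNorm]
    have h1 : A3pow 0 r = fun _ => 1 := by funext c; simp [A3pow]
    rw [h0, h1]
    simp [hammingNorm]
  | succ m ih =>
    have h1 : A3pow (m+1) r = fun c => A3 (r 0) (c 0) * A3pow m (Fin.tail r) (Fin.tail c) := by
      funext c; exact A3pow_succ m r c
    rw [h1, key_count, hammingNorm_A3_row, ih]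
    have h2 : hammingNorm r = (if r 0 ≠ 0 then 1 else 0) + hammingNorm (Fin.tail r) := by
      conv_lhs => rw [← Fin.cons_self_tail r]
      exact norm_cons m (r 0) (Fin.tail r)
    set n := hammingNorm (Fin.tail r) with hn
    have hnm : n ≤ m := norm_le m _
    by_cases h0 : r 0 = 0
    · simp only [h0, if_pos rfl, h2, ne_eq, not_true_eq_false, if_neg, ite_false]
      simp only [h0, ne_eq, not_true_eq_false, ite_false, zero_add]
      have : m + 1 - n = (m - n) + 1 := by omega
      rw [this, pow_succ]
      simp only [if_true]; ring
    · simp only [h0, if_neg h0, h2, ne_eq, h0, not_false_eq_true, ite_true]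
      have : m + 1 - (1 + n) = m - n := by omega
      rw [this, pow_add]
      simp only [if_false]; ring

lemma exp_inj (n a b : ℕ) (h : 2^a * 3^(n-a) = 2^b * 3^(n-b)) : a = b := by
  have h2 : Nat.Prime 2 := by norm_num
  have h3 : Nat.Prime 3 := by norm_num
  have key := congrArg (fun x => x.factorization 2) h
  simp [Nat.factorization_mul, pow_ne_zero, Nat.factorization_pow,
    h2.factorization, h3.factorization, Finsupp.single_apply, h2.ne_zero, h3.ne_zero] at key
  omega

/-- For `m ≥ 2` and `1 ≤ w ≤ m - 1` (here phrased with length `m+1`, `1 ≤ w ≤ m`):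
the submatrix `G_{m+1,w}` of `A3pow (m+1)` consisting of all rows of Hamming weight
`2^w * 3^(m+1-w)` equals, up to a permutation of rows, the vertical concatenation of
`(1,1,1) ⊗ G_{m,w}`, `(1,1,0) ⊗ G_{m,w-1}` and `(1,0,1) ⊗ G_{m,w-1}`. -/
theorem G_recursion (m w : ℕ) (hw1 : 1 ≤ w) (hw2 : w ≤ m) :
    ∃ e : {r : Fin (m+1) → ZMod 3 // hammingNorm (A3pow (m+1) r) = 2^w * 3^(m+1-w)} ≃
        ({r : Fin m → ZMod 3 // hammingNorm (A3pow m r) = 2^w * 3^(m-w)} ⊕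
         {r : Fin m → ZMod 3 // hammingNorm (A3pow m r) = 2^(w-1) * 3^(m-(w-1))} ⊕
         {r : Fin m → ZMod 3 // hammingNorm (A3pow m r) = 2^(w-1) * 3^(m-(w-1))}),
      ∀ x, A3pow (m+1) x.1 =
        Sum.elim
          (fun y => fun c => A3 0 (c 0) * A3pow m y.1 (Fin.tail c))
          (Sum.elim
            (fun y => fun c => A3 1 (c 0) * A3pow m y.1 (Fin.tail c))
            (fun y => fun c => A3 2 (c 0) * A3pow m y.1 (Fin.tail c)))
          (e x) := by
  classical
  have hiff : ∀ (k : ℕ) (v : ℕ) (r : Fin k → ZMod 3),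
      hammingNorm (A3pow k r) = 2^v * 3^(k-v) ↔ hammingNorm r = v := by
    intro k v r
    rw [norm_A3pow]
    exact ⟨fun h => exp_inj k _ _ h, fun h => by rw [h]⟩
  have hsplit : ∀ r : Fin (m+1) → ZMod 3,
      hammingNorm r = (if r 0 ≠ 0 then 1 else 0) + hammingNorm (Fin.tail r) := by
    intro r
    conv_lhs => rw [← Fin.cons_self_tail r]
    exact norm_cons m (r 0) (Fin.tail r)
  have h2of3 : ∀ a : ZMod 3, a ≠ 0 → a ≠ 1 → a = 2 := by decide
  set P := fun r : Fin (m+1) → ZMod 3 => hammingNorm (A3pow (m+1) r) = 2^w * 3^(m+1-w) with hP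
  have tail0 : ∀ x : {r // P r}, x.1 0 = 0 →
      hammingNorm (A3pow m (Fin.tail x.1)) = 2^w * 3^(m-w) := by
    intro x h0
    rw [hiff]
    have hx := (hiff _ _ _).mp x.2
    have := hsplit x.1
    rw [hx] at this
    simp [h0] at this
    omega
  have tail1 : ∀ x : {r // P r}, x.1 0 ≠ 0 →
      hammingNorm (A3pow m (Fin.tail x.1)) = 2^(w-1) * 3^(m-(w-1)) := by
    intro x h0
    rw [hiff]
    have hx := (hiff _ _ _).mp x.2
    have := hsplit x.1
    rw [hx] at this
    simp [h0] at this
    omega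
  have consP : ∀ (a : ZMod 3) (y : Fin m → ZMod 3), a ≠ 0 →
      hammingNorm (A3pow m y) = 2^(w-1) * 3^(m-(w-1)) → P (Fin.cons a y) := by
    intro a y ha hy
    show hammingNorm (A3pow (m+1) (Fin.cons a y)) = 2 ^ w * 3 ^ (m+1-w)
    rw [hiff]
    have hy' := (hiff _ _ _).mp hy
    rw [norm_cons, hy']
    simp [ha]
    omega
  have cons0P : ∀ (y : Fin m → ZMod 3),
      hammingNorm (A3pow m y) = 2^w * 3^(m-w) → P (Fin.cons 0 y) := by
    intro y hy
    show hammingNorm (A3pow (m+1) (Fin.cons 0 y)) = 2 ^ w * 3 ^ (m+1-w)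
    rw [hiff]
    have hy' := (hiff _ _ _).mp hy
    rw [norm_cons, hy']
    simp
  refine ⟨⟨fun x => if h0 : x.1 0 = 0 then Sum.inl ⟨Fin.tail x.1, tail0 x h0⟩
      else if h1 : x.1 0 = 1 then Sum.inr (Sum.inl ⟨Fin.tail x.1, tail1 x h0⟩)
      else Sum.inr (Sum.inr ⟨Fin.tail x.1, tail1 x h0⟩),
    Sum.elim (fun y => ⟨Fin.cons 0 y.1, cons0P y.1 y.2⟩)
      (Sum.elim (fun y => ⟨Fin.cons 1 y.1, consP 1 y.1 (by decide) y.2⟩)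
        (fun y => ⟨Fin.cons 2 y.1, consP 2 y.1 (by decide) y.2⟩)),
    ?_, ?_⟩, ?_⟩
  · intro x
    apply Subtype.ext
    by_cases h0 : x.1 0 = 0
    · simp only [dif_pos h0, Sum.elim_inl]
      conv_rhs => rw [← Fin.cons_self_tail x.1, h0]
    · by_cases h1 : x.1 0 = 1
      · simp only [dif_neg h0, dif_pos h1, Sum.elim_inr, Sum.elim_inl]
        conv_rhs => rw [← Fin.cons_self_tail x.1, h1]
      · simp only [dif_neg h0, dif_neg h1, Sum.elim_inr]
        conv_rhs => rw [← Fin.cons_self_tail x.1, h2of3 _ h0 h1]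
  · have ten : ¬(1:ZMod 3) = 0 := by decide
    have tw0 : ¬(2:ZMod 3) = 0 := by decide
    have tw1 : ¬(2:ZMod 3) = 1 := by decide
    rintro (y | y | y) <;>
      simp [Fin.cons_zero, Fin.tail_cons, ten, tw0, tw1]
  · intro x
    by_cases h0 : x.1 0 = 0
    · simp only [Equiv.coe_fn_mk, dif_pos h0, Sum.elim_inl]
      funext c
      rw [A3pow_succ, h0]
    · by_cases h1 : x.1 0 = 1
      · simp only [Equiv.coe_fn_mk, dif_neg h0, dif_pos h1, Sum.elim_inr, Sum.elim_inl]
        funext c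
        rw [A3pow_succ, h1]
      · simp only [Equiv.coe_fn_mk, dif_neg h0, dif_neg h1, Sum.elim_inr]
        funext c
        rw [A3pow_succ, h2of3 _ h0 h1]
end

section
/- For 0 ≤ w ≤ m, the submatrix of A₃^{⊗m} consisting of all rows with Hamming weight 2^w·3^{m−w} is a generator matrix of the code 𝒜(m,{w}); that is, its row space equals 𝒜(m,{w}). -/
open Finset

-- ## scalar prelims
lemma zmod3_sum {R : Type*} [AddCommMonoid R] (f : ZMod 3 → R) :
    ∑ c : ZMod 3, f c = f 0 + f 1 + f 2 := by
  show ∑ c : Fin 3, f c = _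
  exact Fin.sum_univ_three f

lemma zmod3_cases (d : ZMod 3) : d = 0 ∨ d = 1 ∨ d = 2 := by revert d; decide

noncomputable def ch (α : F4) : ZMod 3 → F4 := fun t => α ^ t.val

noncomputable def X3 (α : F4) : Matrix (ZMod 3) (ZMod 3) F4 := fun s t => ch α (s * t)

noncomputable def A3F : Matrix (ZMod 3) (ZMod 3) F4 := A3.map (algebraMap F2 F4)

noncomputable def D3 (α : F4) : Matrix (ZMod 3) (ZMod 3) F4 := A3F * X3 α

lemma alpha_cube (α : F4) (hα : orderOf α = 3) : α ^ 3 = 1 := by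
  rw [← hα]; exact pow_orderOf_eq_one α

lemma two_eq_zero : (2 : F4) = 0 := by exact_mod_cast CharP.cast_eq_zero F4 2

lemma alpha_rel (α : F4) (hα : orderOf α = 3) : 1 + α + α^2 = 0 := by
  have h3 : α^3 = 1 := alpha_cube α hα
  have hne : α ≠ 1 := by intro h; rw [h, orderOf_one] at hα; norm_num at hα
  have key : (α + 1) * (1 + α + α^2) = 0 := by
    linear_combination h3 + (α^2+α+1)*two_eq_zero
  rcases mul_eq_zero.1 key with h | h
  · exact absurd (by linear_combination h - two_eq_zero) hne
  · exact h

lemma ch_add (α : F4) (hα : orderOf α = 3) (s t : ZMod 3) :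
    ch α (s + t) = ch α s * ch α t := by
  unfold ch
  rw [← pow_add]
  conv_lhs => rw [← pow_mod_orderOf, hα]
  conv_rhs => rw [← pow_mod_orderOf, hα]
  congr 1
  rw [ZMod.val_add]
  omega

lemma ch_zero (α : F4) : ch α 0 = 1 := by simp [ch]
lemma ch_one (α : F4) : ch α 1 = α := by
  show α ^ (1 : ZMod 3).val = α
  norm_num [show (1 : ZMod 3).val = 1 from rfl]
lemma ch_two (α : F4) : ch α 2 = α^2 := by
  show α ^ (2 : ZMod 3).val = α^2
  norm_num [show (2 : ZMod 3).val = 2 from rfl]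

lemma ch_sum (α : F4) (hα : orderOf α = 3) {ι : Type*} (s : Finset ι) (f : ι → ZMod 3) :
    ch α (∑ i ∈ s, f i) = ∏ i ∈ s, ch α (f i) := by
  classical
  induction s using Finset.induction with
  | empty => simp [ch_zero]
  | insert _ _ h ih => rw [Finset.sum_insert h, Finset.prod_insert h, ch_add α hα, ih]

lemma D3_apply (α : F4) (s t : ZMod 3) :
    D3 α s t = algebraMap F2 F4 (A3 s 0) + algebraMap F2 F4 (A3 s 1) * ch α t
      + algebraMap F2 F4 (A3 s 2) * ch α (2*t) := by
  rw [D3, Matrix.mul_apply, zmod3_sum]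
  simp [A3F, X3, ch_zero]

lemma D3_left_zero (α : F4) (s : ZMod 3) (hs : s ≠ 0) : D3 α s 0 = 0 := by
  rw [D3_apply]
  norm_num [ch_zero]
  rcases zmod3_cases s with h | h | h
  · exact absurd h hs
  · subst h
    norm_num [show A3 1 0 = 1 from rfl, show A3 1 1 = 1 from rfl, show A3 1 2 = 0 from rfl]
    linear_combination two_eq_zero
  · subst h
    norm_num [show A3 2 0 = 1 from rfl, show A3 2 1 = 0 from rfl, show A3 2 2 = 1 from rfl]
    linear_combination two_eq_zero

lemma D3_top_zero (α : F4) (hα : orderOf α = 3) (t : ZMod 3) (ht : t ≠ 0) : D3 α 0 t = 0 := by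
  rw [D3_apply]
  norm_num [show A3 0 0 = 1 from rfl, show A3 0 1 = 1 from rfl, show A3 0 2 = 1 from rfl]
  rcases zmod3_cases t with h | h | h
  · exact absurd h ht
  · subst h
    rw [ch_one, show (2 * 1 : ZMod 3) = 2 from rfl, ch_two]
    linear_combination alpha_rel α hα
  · subst h
    rw [ch_two, show (2 * 2 : ZMod 3) = 1 from rfl, ch_one]
    linear_combination alpha_rel α hα

lemma A3sq : A3 * A3 = Matrix.of ![![1,0,0], ![0,0,1], ![0,1,0]] := Matrix.ext fun i j => by fin_cases i <;> fin_cases j <;> decide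
lemma A3quad : A3 * (A3 * A3 * A3) = 1 := Matrix.ext fun i j => by fin_cases i <;> fin_cases j <;> decide

lemma X3_mul_X3 (α : F4) (hα : orderOf α = 3) : X3 α * X3 α = A3F * A3F := by
  ext s u
  have lhs : (X3 α * X3 α) s u = 1 + ch α (s+u) + ch α (2*(s+u)) := by
    rw [Matrix.mul_apply, zmod3_sum]
    simp only [X3]
    rw [← ch_add α hα, ← ch_add α hα, ← ch_add α hα]
    rw [show s * 0 + 0 * u = 0 by ring, show s*1 + 1*u = s + u by ring,
        show s*2 + 2*u = 2*(s+u) by ring, ch_zero]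
  have rhs : (A3F * A3F) s u = algebraMap F2 F4 ((A3 * A3) s u) := by
    rw [show A3F * A3F = (A3 * A3).map (algebraMap F2 F4) from (Matrix.map_mul).symm]
    rfl
  rw [lhs, rhs]
  have hA : ∀ a b : ZMod 3, (A3 * A3) a b = if a + b = 0 then 1 else 0 := by decide
  rw [hA]
  rcases zmod3_cases (s + u) with h | h | h <;> rw [h]
  · rw [show (2*(0:ZMod 3)) = 0 from rfl, ch_zero, if_pos rfl, map_one]
    linear_combination two_eq_zero
  · rw [show (2*(1:ZMod 3)) = 2 from rfl, ch_one, ch_two,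
      if_neg (by decide : (1:ZMod 3) ≠ 0), map_zero]
    linear_combination alpha_rel α hα
  · rw [show (2*(2:ZMod 3)) = 1 from rfl, ch_one, ch_two,
      if_neg (by decide : (2:ZMod 3) ≠ 0), map_zero]
    linear_combination alpha_rel α hα

-- ## Kronecker powers
section kron
variable {R S : Type*} [CommSemiring R] [CommSemiring S]

def kron (m : ℕ) (M : Matrix (ZMod 3) (ZMod 3) R) :
    Matrix (Fin m → ZMod 3) (Fin m → ZMod 3) R := fun r c => ∏ i, M (r i) (c i)

lemma kron_mul (m : ℕ) (M N : Matrix (ZMod 3) (ZMod 3) R) :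
    kron m (M * N) = kron m M * kron m N := by
  ext r c
  have h1 : kron m (M * N) r c = ∏ i, ∑ t, M (r i) t * N t (c i) := by
    simp [kron, Matrix.mul_apply]
  rw [h1, Finset.prod_univ_sum]
  simp [Matrix.mul_apply, kron, Finset.prod_mul_distrib]

lemma kron_one (m : ℕ) : kron m (1 : Matrix (ZMod 3) (ZMod 3) R) = 1 := by
  ext r c
  by_cases h : r = c
  · subst h; simp [kron, Matrix.one_apply]
  · obtain ⟨i, hi⟩ := Function.ne_iff.1 h
    rw [kron, Matrix.one_apply, if_neg h, Finset.prod_eq_zero (mem_univ i)]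
    rw [Matrix.one_apply, if_neg hi]

lemma kron_map (m : ℕ) (f : R →+* S) (M : Matrix (ZMod 3) (ZMod 3) R) :
    (kron m M).map f = kron m (M.map f) := by
  ext r c
  simp [kron, Matrix.map_apply, map_prod]

lemma kron_symm (m : ℕ) {M : Matrix (ZMod 3) (ZMod 3) R}
    (hM : ∀ s t, M s t = M t s) (r c : Fin m → ZMod 3) :
    kron m M r c = kron m M c r := by
  unfold kron
  exact Finset.prod_congr rfl fun i _ => hM (r i) (c i)

lemma mulVec_map (f : R →+* S) {n : Type*} [Fintype n] (M : Matrix n n R) (v : n → R) (r : n) :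
    f ((M.mulVec v) r) = ((M.map f).mulVec (fun i => f (v i))) r := by
  simp [Matrix.mulVec, dotProduct, map_sum, Matrix.map_apply]

end kron

lemma A3pow_eq (m : ℕ) : A3pow m = kron m A3 := rfl

lemma A3_symm : ∀ s t, A3 s t = A3 t s := fun s t => by fin_cases s <;> fin_cases t <;> decide

-- ## DFT lemmas
lemma dft_eq (m : ℕ) (α : F4) (hα : orderOf α = 3) (j : Fin m → ZMod 3)
    (a : (Fin m → ZMod 3) → F2) :
    dftL m α j a = ((kron m (X3 α)).mulVec (fun i => algebraMap F2 F4 (a i))) j := by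
  rw [dftL]
  simp only [LinearMap.sum_apply, LinearMap.smul_apply, LinearMap.comp_apply,
    LinearMap.proj_apply, Algebra.linearMap_apply, smul_eq_mul]
  rw [Matrix.mulVec, dotProduct]
  refine Finset.sum_congr rfl fun i _ => ?_
  congr 1
  show ch α (∑ l, i l * j l) = kron m (X3 α) j i
  rw [ch_sum α hα, kron]
  exact Finset.prod_congr rfl fun l _ => by rw [X3, mul_comm]

lemma dft_row (m : ℕ) (α : F4) (hα : orderOf α = 3) (j r : Fin m → ZMod 3) :
    dftL m α j (A3pow m r) = kron m (D3 α) r j := by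
  rw [dft_eq m α hα, Matrix.mulVec, dotProduct]
  have : ∀ i, algebraMap F2 F4 (A3pow m r i) = kron m A3F r i := by
    intro i
    show _ = kron m (A3.map (algebraMap F2 F4)) r i
    rw [← kron_map, Matrix.map_apply, A3pow_eq]
  calc ∑ i, kron m (X3 α) j i * algebraMap F2 F4 (A3pow m r i)
      = ∑ i, kron m A3F r i * kron m (X3 α) i j := by
        refine Finset.sum_congr rfl fun i _ => ?_
        rw [this i, kron_symm m (fun s t => by unfold X3; rw [mul_comm]) j i, mul_comm]
    _ = (kron m A3F * kron m (X3 α)) r j := by rw [Matrix.mul_apply]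
    _ = kron m (D3 α) r j := by rw [← kron_mul, D3]

lemma kronD_zero (m : ℕ) (α : F4) (hα : orderOf α = 3) (r j : Fin m → ZMod 3)
    (h : hammingNorm r ≠ hammingNorm j) : kron m (D3 α) r j = 0 := by
  have : ¬ (∀ i, (r i = 0 ↔ j i = 0)) := by
    intro hall
    apply h
    unfold hammingNorm
    congr 1
    exact Finset.filter_congr fun i _ => by rw [not_iff_not]; exact hall i
  push_neg at this
  obtain ⟨i, hi⟩ := this
  apply Finset.prod_eq_zero (Finset.mem_univ i)
  rcases hi with ⟨hr, hj⟩ | ⟨hr, hj⟩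
  · rw [hr]; exact D3_top_zero α hα _ hj
  · rw [hj]; exact D3_left_zero α _ hr

-- ## weights
lemma pow23_inj {m a b : ℕ} (h : 2^a*3^(m-a) = 2^b*3^(m-b)) : a = b := by
  have h2 := congrArg (fun n => n.factorization 2) h
  rw [Nat.factorization_mul (pow_ne_zero _ (by norm_num)) (pow_ne_zero _ (by norm_num)),
    Nat.factorization_mul (pow_ne_zero _ (by norm_num)) (pow_ne_zero _ (by norm_num))] at h2
  simpa [Nat.Prime.factorization_pow, Nat.prime_two, Nat.prime_three,
    Finsupp.single_apply] using h2

lemma row_weight (m : ℕ) (r : Fin m → ZMod 3) :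
    hammingNorm (A3pow m r) = 2^(hammingNorm r) * 3^(m - hammingNorm r) := by
  classical
  have hfilt : (Finset.univ.filter fun c : Fin m → ZMod 3 => A3pow m r c ≠ 0)
      = Fintype.piFinset (fun i => Finset.univ.filter fun x => A3 (r i) x ≠ 0) := by
    ext c
    simp [Fintype.mem_piFinset, A3pow, Finset.prod_ne_zero_iff]
  have h1 : hammingNorm (A3pow m r)
      = ∏ i, (Finset.univ.filter fun x => A3 (r i) x ≠ 0).card := by
    show (Finset.univ.filter fun c => A3pow m r c ≠ 0).card = _
    rw [hfilt, Fintype.card_piFinset]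
  have hcard : ∀ s : ZMod 3, (Finset.univ.filter fun x => A3 s x ≠ 0).card
      = if s = 0 then 3 else 2 := by decide
  rw [h1]
  simp_rw [hcard]
  rw [Finset.prod_ite (fun _ => 3) (fun _ => 2), Finset.prod_const, Finset.prod_const]
  have hnot : (Finset.univ.filter fun i => ¬ r i = 0) = Finset.univ.filter fun i => r i ≠ 0 := rfl
  have hN : hammingNorm r = (Finset.univ.filter fun i : Fin m => r i ≠ 0).card := rfl
  have hsplit := Finset.card_filter_add_card_filter_not
    (s := Finset.univ) (p := fun i : Fin m => r i = 0)
  rw [Finset.card_univ, Fintype.card_fin] at hsplit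
  rw [hnot, ← hN] at hsplit
  have hz : (Finset.univ.filter fun i : Fin m => r i = 0).card = m - hammingNorm r := by omega
  rw [hN, hz, ← hN, mul_comm]


/-- The rows of `A3pow m` of Hamming weight `2^w * 3^(m-w)` span exactly `𝒜(m,{w})`. -/
theorem rows_span_abelianCode (m w : ℕ) (hw : w ≤ m) (α : F4) (hα : orderOf α = 3) :
    Submodule.span F2
        {a | ∃ r, hammingNorm (A3pow m r) = 2^w * 3^(m-w) ∧ a = A3pow m r}
      = abelianCode m α {w} := by
  classical
  have hset : {a | ∃ r, hammingNorm (A3pow m r) = 2^w * 3^(m-w) ∧ a = A3pow m r}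
      = {a : (Fin m → ZMod 3) → F2 | ∃ r, hammingNorm r = w ∧ a = A3pow m r} := by
    ext a
    constructor
    · rintro ⟨r, h1, rfl⟩
      exact ⟨r, pow23_inj (by rw [← row_weight]; exact h1), rfl⟩
    · rintro ⟨r, h1, rfl⟩
      exact ⟨r, by rw [row_weight, h1], rfl⟩
  rw [hset]
  have hmem : ∀ a, a ∈ abelianCode m α {w} ↔
      ∀ j, hammingNorm j ≠ w → dftL m α j a = 0 := by
    intro a
    simp [abelianCode, Submodule.mem_iInf, LinearMap.mem_ker]
  have hmat : (A3*A3*A3).map (algebraMap F2 F4) = D3 α * X3 α := by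
    rw [Matrix.map_mul, Matrix.map_mul, D3, Matrix.mul_assoc A3F (X3 α) (X3 α),
      X3_mul_X3 α hα, ← Matrix.mul_assoc]
    rfl
  apply le_antisymm
  · rw [Submodule.span_le]
    rintro a ⟨r, hr, rfl⟩
    rw [SetLike.mem_coe, hmem]
    intro j hj
    rw [dft_row m α hα]
    exact kronD_zero m α hα r j (by rw [hr]; exact fun hh => hj hh.symm)
  · intro a ha
    rw [hmem] at ha
    set x : (Fin m → ZMod 3) → F2 := (kron m (A3*A3*A3)).mulVec a with hx
    have hxa : (kron m A3).mulVec x = a := by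
      rw [hx, Matrix.mulVec_mulVec, ← kron_mul, A3quad, kron_one, Matrix.one_mulVec]
    have hdft : (fun j => dftL m α j a)
        = (kron m (X3 α)).mulVec (fun i => algebraMap F2 F4 (a i)) :=
      funext fun j => dft_eq m α hα j a
    have hxt : ∀ r, hammingNorm r ≠ w → x r = 0 := by
      intro r hr
      apply (RingHom.injective (algebraMap F2 F4))
      rw [map_zero]
      have e1 : algebraMap F2 F4 (x r)
          = ((kron m (D3 α)).mulVec (fun j => dftL m α j a)) r := by
        rw [hdft, Matrix.mulVec_mulVec, ← kron_mul, hx,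
          mulVec_map (algebraMap F2 F4), kron_map, hmat]
      rw [e1, Matrix.mulVec, dotProduct]
      apply Finset.sum_eq_zero
      intro j _
      by_cases hjw : hammingNorm j = w
      · rw [kronD_zero m α hα r j (by rw [hjw]; exact hr), zero_mul]
      · rw [ha j hjw, mul_zero]
    have hsum : a = ∑ r, x r • A3pow m r := by
      funext c
      rw [← hxa]
      show (kron m A3).mulVec x c = _
      rw [Matrix.mulVec, dotProduct, Finset.sum_apply]
      refine Finset.sum_congr rfl fun r _ => ?_
      show kron m A3 c r * x r = x r • A3pow m r c
      rw [smul_eq_mul, mul_comm, A3pow_eq, kron_symm m A3_symm]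
    rw [hsum]
    apply Submodule.sum_mem
    intro r _
    by_cases hrw : hammingNorm r = w
    · exact Submodule.smul_mem _ _ (Submodule.subset_span ⟨r, hrw, rfl⟩)
    · rw [hxt r hrw, zero_smul]
      exact Submodule.zero_mem _
end

section
/- For 0 ≤ r₁ ≤ r₂ ≤ m, the rows of A₃^{⊗m} whose Hamming weights lie in the interval [2^{r₂}·3^{m−r₂}, 2^{r₁}·3^{m−r₁}] span the BiD code BiD(m,r₁,r₂), which has F₂-dimension Σ_{w=r₁}^{r₂} C(m,w)·2^w. -/
open Finset

namespace BiDAux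

variable {α : F4}

lemma two_eq_zero : (2 : F4) = 0 := by
  have := CharP.cast_eq_zero F4 2; exact_mod_cast this
lemma alpha_cube (hα : orderOf α = 3) : α ^ 3 = 1 := by
  rw [← hα]; exact pow_orderOf_eq_one α
lemma alpha_quad (hα : orderOf α = 3) : α ^ 2 + α + 1 = 0 := by
  have h3 := alpha_cube hα
  have hne : α ≠ 1 := by intro h; rw [h, orderOf_one] at hα; omega
  have h0 : (α - 1) * (α ^ 2 + α + 1) = 0 := by linear_combination h3
  rcases mul_eq_zero.1 h0 with h | h
  · exact absurd (sub_eq_zero.1 h) hne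
  · exact h

lemma z3cases : ∀ x : ZMod 3, x = 0 ∨ x = 1 ∨ x = 2 := by decide

noncomputable def Fc (α : F4) (r j : ZMod 3) : F4 :=
  ∑ x : ZMod 3, α ^ (x * j).val * algebraMap F2 F4 (A3 r x)

lemma univ3 : (Finset.univ : Finset (ZMod 3)) = {0,1,2} := by decide

lemma Fc_expand (r j : ZMod 3) :
    Fc α r j = α ^ ((0:ZMod 3) * j).val * algebraMap F2 F4 (A3 r 0)
      + α ^ ((1:ZMod 3) * j).val * algebraMap F2 F4 (A3 r 1)
      + α ^ ((2:ZMod 3) * j).val * algebraMap F2 F4 (A3 r 2) := by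
  rw [Fc, univ3, Finset.sum_insert (by decide), Finset.sum_insert (by decide),
    Finset.sum_singleton, add_assoc]

lemma A3e : A3 0 0 = 1 ∧ A3 0 1 = 1 ∧ A3 0 2 = 1 ∧ A3 1 0 = 1 ∧ A3 1 1 = 1 ∧ A3 1 2 = 0
    ∧ A3 2 0 = 1 ∧ A3 2 1 = 0 ∧ A3 2 2 = 1 := by decide

lemma vals : ZMod.val (0:ZMod 3) = 0 ∧ ZMod.val (1:ZMod 3) = 1 ∧ ZMod.val (2:ZMod 3) = 2
    ∧ ZMod.val (4:ZMod 3) = 1 := by decide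

lemma Fc00 : Fc α 0 0 = 1 + 1 + 1 := by
  rw [Fc_expand]; norm_num [vals.1, vals.2.1, vals.2.2.1, vals.2.2.2, A3e.1, A3e.2.1, A3e.2.2.1,
    (by decide : ((0:ZMod 3)*0).val = 0), (by decide : ((1:ZMod 3)*0).val = 0),
    (by decide : ((2:ZMod 3)*0).val = 0)]
lemma Fc01 : Fc α 0 1 = 1 + α + α^2 := by
  rw [Fc_expand]; norm_num [vals.1, vals.2.1, vals.2.2.1, vals.2.2.2, A3e.1, A3e.2.1, A3e.2.2.1,
    (by decide : ((0:ZMod 3)*1).val = 0), (by decide : ((1:ZMod 3)*1).val = 1),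
    (by decide : ((2:ZMod 3)*1).val = 2)]
lemma Fc02 : Fc α 0 2 = 1 + α^2 + α := by
  rw [Fc_expand]; norm_num [vals.1, vals.2.1, vals.2.2.1, vals.2.2.2, A3e.1, A3e.2.1, A3e.2.2.1,
    (by decide : ((0:ZMod 3)*2).val = 0), (by decide : ((1:ZMod 3)*2).val = 2),
    (by decide : ((2:ZMod 3)*2).val = 1)]
lemma Fc10 : Fc α 1 0 = 1 + 1 := by
  rw [Fc_expand]; norm_num [vals.1, vals.2.1, vals.2.2.1, vals.2.2.2, A3e.2.2.2.1, A3e.2.2.2.2.1, A3e.2.2.2.2.2.1,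
    (by decide : ((0:ZMod 3)*0).val = 0), (by decide : ((1:ZMod 3)*0).val = 0)]
lemma Fc20 : Fc α 2 0 = 1 + 1 := by
  rw [Fc_expand]; norm_num [vals.1, vals.2.1, vals.2.2.1, vals.2.2.2, A3e.2.2.2.2.2.2.1, A3e.2.2.2.2.2.2.2.1, A3e.2.2.2.2.2.2.2.2,
    (by decide : ((0:ZMod 3)*0).val = 0), (by decide : ((2:ZMod 3)*0).val = 0)]
lemma Fc11 : Fc α 1 1 = 1 + α := by
  rw [Fc_expand]; norm_num [vals.1, vals.2.1, vals.2.2.1, vals.2.2.2, A3e.2.2.2.1, A3e.2.2.2.2.1, A3e.2.2.2.2.2.1,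
    (by decide : ((0:ZMod 3)*1).val = 0), (by decide : ((1:ZMod 3)*1).val = 1)]
lemma Fc12 : Fc α 1 2 = 1 + α^2 := by
  rw [Fc_expand]; norm_num [vals.1, vals.2.1, vals.2.2.1, vals.2.2.2, A3e.2.2.2.1, A3e.2.2.2.2.1, A3e.2.2.2.2.2.1,
    (by decide : ((0:ZMod 3)*2).val = 0), (by decide : ((1:ZMod 3)*2).val = 2)]
lemma Fc21 : Fc α 2 1 = 1 + α^2 := by
  rw [Fc_expand]; norm_num [vals.1, vals.2.1, vals.2.2.1, vals.2.2.2, A3e.2.2.2.2.2.2.1, A3e.2.2.2.2.2.2.2.1, A3e.2.2.2.2.2.2.2.2,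
    (by decide : ((0:ZMod 3)*1).val = 0), (by decide : ((2:ZMod 3)*1).val = 2)]
lemma Fc22 : Fc α 2 2 = 1 + α := by
  rw [Fc_expand]; norm_num [vals.1, vals.2.1, vals.2.2.1, vals.2.2.2, A3e.2.2.2.2.2.2.1, A3e.2.2.2.2.2.2.2.1, A3e.2.2.2.2.2.2.2.2,
    (by decide : ((0:ZMod 3)*2).val = 0), (by decide : ((2:ZMod 3)*2).val = 1)]

lemma Fc_mismatch (hα : orderOf α = 3) {r j : ZMod 3} (h : ¬(r = 0 ↔ j = 0)) :
    Fc α r j = 0 := by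
  have hq := alpha_quad hα
  have h2 : (2:F4) = 0 := two_eq_zero
  rcases z3cases r with hr | hr | hr <;> rcases z3cases j with hj | hj | hj <;> subst hr <;> subst hj <;>
    first
      | exact absurd (by decide) h
      | (rw [Fc01]; linear_combination hq)
      | (rw [Fc02]; linear_combination hq)
      | (rw [Fc10]; linear_combination h2)
      | (rw [Fc20]; linear_combination h2)

lemma Hsum0 (r : ZMod 3) :
    (∑ y ∈ (if (0:ZMod 3) = 0 then ({0} : Finset (ZMod 3)) else {1,2}),
      α ^ ((0:ZMod 3) * y).val * Fc α r y) = Fc α r 0 := by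
  rw [if_pos rfl, Finset.sum_singleton]
  norm_num [vals.1]

lemma HsumS {s : ZMod 3} (hs : s ≠ 0) (r : ZMod 3) :
    (∑ y ∈ (if s = 0 then ({0} : Finset (ZMod 3)) else {1,2}),
      α ^ (s * y).val * Fc α r y)
      = α ^ (s * 1).val * Fc α r 1 + α ^ (s * 2).val * Fc α r 2 := by
  rw [if_neg hs, Finset.sum_insert (by decide), Finset.sum_singleton]

lemma Hsum (hα : orderOf α = 3) (s r : ZMod 3) :
    (∑ y ∈ (if s = 0 then ({0} : Finset (ZMod 3)) else {1,2}),
      α ^ (s * y).val * Fc α r y) = if r = -s then 1 else 0 := by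
  have hq := alpha_quad hα
  have h3 := alpha_cube hα
  have h2 : (2:F4) = 0 := two_eq_zero
  rcases z3cases s with hs|hs|hs <;> subst hs <;> rcases z3cases r with hr|hr|hr <;> subst hr
  · rw [Hsum0, Fc00, if_pos (by decide)]; linear_combination h2
  · rw [Hsum0, Fc10, if_neg (by decide)]; linear_combination h2
  · rw [Hsum0, Fc20, if_neg (by decide)]; linear_combination h2
  · rw [HsumS (by decide), Fc01, Fc02, if_neg (by decide),
      (by decide : ((1:ZMod 3) * 1).val = 1), (by decide : ((1:ZMod 3) * 2).val = 2)]
    linear_combination α * h3 + (α + α^2 + α^3) * h2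
  · rw [HsumS (by decide), Fc11, Fc12, if_neg (by decide),
      (by decide : ((1:ZMod 3) * 1).val = 1), (by decide : ((1:ZMod 3) * 2).val = 2)]
    linear_combination α * h3 + (α + α^2) * h2
  · rw [HsumS (by decide), Fc21, Fc22, if_pos (by decide),
      (by decide : ((1:ZMod 3) * 1).val = 1), (by decide : ((1:ZMod 3) * 2).val = 2)]
    linear_combination hq + 2 * h3
  · rw [HsumS (by decide), Fc01, Fc02, if_neg (by decide),
      (by decide : ((2:ZMod 3) * 1).val = 2), (by decide : ((2:ZMod 3) * 2).val = 1)]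
    linear_combination α * h3 + (α + α^2 + α^3) * h2
  · rw [HsumS (by decide), Fc11, Fc12, if_pos (by decide),
      (by decide : ((2:ZMod 3) * 1).val = 2), (by decide : ((2:ZMod 3) * 2).val = 1)]
    linear_combination hq + 2 * h3
  · rw [HsumS (by decide), Fc21, Fc22, if_neg (by decide),
      (by decide : ((2:ZMod 3) * 1).val = 2), (by decide : ((2:ZMod 3) * 2).val = 1)]
    linear_combination α * h3 + (α + α^2) * h2

lemma pow_val_add (hα : orderOf α = 3) (a b : ZMod 3) :
    α ^ (a + b).val = α ^ a.val * α ^ b.val := by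
  have h := pow_mod_orderOf α (a.val + b.val)
  rw [hα] at h
  rw [ZMod.val_add, h, pow_add]

lemma pow_val_sum (hα : orderOf α = 3) {ι : Type*} [DecidableEq ι] (s : Finset ι) (v : ι → ZMod 3) :
    α ^ (∑ l ∈ s, v l).val = ∏ l ∈ s, α ^ (v l).val := by
  induction s using Finset.induction_on with
  | empty => simp
  | insert _ _ h ih => rw [Finset.sum_insert h, Finset.prod_insert h, pow_val_add hα, ih]

variable {m : ℕ}

lemma dftL_apply (α : F4) (j : Fin m → ZMod 3) (a : (Fin m → ZMod 3) → F2) :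
    dftL m α j a = ∑ i, α ^ (∑ l, i l * j l).val * algebraMap F2 F4 (a i) := by
  rw [dftL, LinearMap.sum_apply]
  refine Finset.sum_congr rfl fun i _ => ?_
  rw [LinearMap.smul_apply, LinearMap.comp_apply, smul_eq_mul]
  rfl

lemma dftL_row (hα : orderOf α = 3) (r j : Fin m → ZMod 3) :
    dftL m α j (A3pow m r) = ∏ l, Fc α (r l) (j l) := by
  rw [dftL_apply]
  have step : ∀ i : Fin m → ZMod 3,
      α ^ (∑ l, i l * j l).val * algebraMap F2 F4 (A3pow m r i)
        = ∏ l, α ^ (i l * j l).val * algebraMap F2 F4 (A3 (r l) (i l)) := by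
    intro i
    rw [A3pow, map_prod, pow_val_sum hα, ← Finset.prod_mul_distrib]
  rw [Finset.sum_congr rfl (fun i _ => step i)]
  have key := Finset.prod_univ_sum (fun _ : Fin m => (univ : Finset (ZMod 3)))
      (fun l y => α ^ (y * j l).val * algebraMap F2 F4 (A3 (r l) y))
  rw [Fintype.piFinset_univ] at key
  exact key.symm

lemma dftL_row_zero (hα : orderOf α = 3) {r j : Fin m → ZMod 3}
    (h : hammingNorm j ≠ hammingNorm r) : dftL m α j (A3pow m r) = 0 := by
  obtain ⟨l, hl⟩ : ∃ l, ¬(r l = 0 ↔ j l = 0) := by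
    by_contra hc
    push_neg at hc
    apply h
    unfold hammingNorm
    congr 1
    apply Finset.filter_congr
    intro x _
    simp only [ne_eq]
    rw [not_iff_not]
    exact (hc x).symm
  rw [dftL_row hα]
  exact Finset.prod_eq_zero (Finset.mem_univ l) (Fc_mismatch hα hl)

lemma weighted_row (hα : orderOf α = 3) (r₀ r : Fin m → ZMod 3) :
    ∑ j ∈ Fintype.piFinset (fun l => if r₀ l = 0 then ({0}:Finset (ZMod 3)) else {1,2}),
      α ^ (∑ l, r₀ l * j l).val * dftL m α j (A3pow m r)
      = if r = -r₀ then 1 else 0 := by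
  have step : ∀ j : Fin m → ZMod 3,
      α ^ (∑ l, r₀ l * j l).val * dftL m α j (A3pow m r)
        = ∏ l, α ^ (r₀ l * j l).val * Fc α (r l) (j l) := by
    intro j
    rw [dftL_row hα, pow_val_sum hα, ← Finset.prod_mul_distrib]
  rw [Finset.sum_congr rfl (fun j _ => step j)]
  have key := Finset.prod_univ_sum
      (fun l => if r₀ l = 0 then ({0}:Finset (ZMod 3)) else {1,2})
      (fun l y => α ^ (r₀ l * y).val * Fc α (r l) y)
  refine key.symm.trans ?_
  rw [Finset.prod_congr rfl (fun l _ => Hsum (α := α) hα (r₀ l) (r l))]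
  by_cases h : r = -r₀
  · rw [if_pos h]
    subst h
    refine Finset.prod_eq_one fun l _ => if_pos rfl
  · rw [if_neg h]
    obtain ⟨l, hl⟩ : ∃ l, r l ≠ -r₀ l := by
      by_contra hc
      push_neg at hc
      exact h (funext hc)
    exact Finset.prod_eq_zero (Finset.mem_univ l) (if_neg hl)

lemma norm_le (r : Fin m → ZMod 3) : hammingNorm r ≤ m := by
  refine le_trans (Finset.card_filter_le _ _) ?_
  simp

lemma cardA3 : ∀ s : ZMod 3, (univ.filter (fun x => A3 s x ≠ 0)).card = if s = 0 then 3 else 2 := by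
  decide

lemma row_norm (r : Fin m → ZMod 3) :
    hammingNorm (A3pow m r) = 2 ^ hammingNorm r * 3 ^ (m - hammingNorm r) := by
  have hfilt : (univ.filter fun c : Fin m → ZMod 3 => A3pow m r c ≠ 0)
      = Fintype.piFinset (fun l => univ.filter fun x => A3 (r l) x ≠ 0) := by
    ext c
    simp [Fintype.mem_piFinset, A3pow, Finset.prod_ne_zero_iff]
  have h1 : hammingNorm (A3pow m r)
      = ∏ l, (univ.filter fun x => A3 (r l) x ≠ 0).card := by
    show (univ.filter fun c : Fin m → ZMod 3 => A3pow m r c ≠ 0).card = _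
    rw [hfilt, Fintype.card_piFinset]
  rw [h1, Finset.prod_congr rfl (fun l _ => cardA3 (r l)),
    Finset.prod_ite (fun _ => 3) (fun _ => 2), Finset.prod_const, Finset.prod_const]
  have hwt : hammingNorm r = (univ.filter fun l => ¬ r l = 0).card := rfl
  have hz : (univ.filter fun l => r l = 0).card = m - hammingNorm r := by
    have : (univ.filter fun l => r l = 0) = univ \ (univ.filter fun l => ¬ r l = 0) := by
      rw [← Finset.filter_not]
      simp
    rw [this, Finset.card_sdiff_of_subset (Finset.filter_subset _ _), ← hwt]
    simp
  rw [hz, ← hwt, mul_comm]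

lemma count_norm (w : ℕ) :
    (univ.filter fun r : Fin m → ZMod 3 => hammingNorm r = w).card = m.choose w * 2 ^ w := by
  have hmem : ∀ r ∈ (univ.filter fun r : Fin m → ZMod 3 => hammingNorm r = w),
      (univ.filter fun l => r l ≠ 0) ∈ Finset.powersetCard w (univ : Finset (Fin m)) := by
    intro r hr
    rw [Finset.mem_powersetCard_univ]
    exact (Finset.mem_filter.1 hr).2
  rw [Finset.card_eq_sum_card_fiberwise hmem]
  have hfib : ∀ s ∈ Finset.powersetCard w (univ : Finset (Fin m)),
      ((univ.filter fun r : Fin m → ZMod 3 => hammingNorm r = w).filter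
        fun r => (univ.filter fun l => r l ≠ 0) = s).card = 2 ^ w := by
    intro s hs
    rw [Finset.mem_powersetCard_univ] at hs
    have key : ((univ.filter fun r : Fin m → ZMod 3 => hammingNorm r = w).filter
        fun r => (univ.filter fun l => r l ≠ 0) = s)
        = Fintype.piFinset (fun l => if l ∈ s then ({1,2} : Finset (ZMod 3)) else {0}) := by
      ext r
      simp only [Finset.mem_filter, Finset.mem_univ, true_and, Fintype.mem_piFinset]
      constructor
      · rintro ⟨-, hsupp⟩
        intro l
        by_cases hl : l ∈ s
        · rw [if_pos hl]
          rw [← hsupp, Finset.mem_filter] at hl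
          rcases z3cases (r l) with h|h|h <;> simp [h] at hl ⊢ <;> decide
        · rw [if_neg hl]
          rw [← hsupp, Finset.mem_filter] at hl
          push_neg at hl
          have := hl (Finset.mem_univ l)
          replace this : r l = 0 := by simpa using this
          simp [this]
      · intro hmem
        have hsupp : (univ.filter fun l => r l ≠ 0) = s := by
          ext l
          rw [Finset.mem_filter]
          constructor
          · rintro ⟨-, hne⟩
            by_contra hl
            have := hmem l
            rw [if_neg hl, Finset.mem_singleton] at this
            exact hne this
          · intro hl
            refine ⟨Finset.mem_univ l, ?_⟩
            have := hmem l
            rw [if_pos hl] at this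
            revert this
            rcases z3cases (r l) with h|h|h <;> simp [h] <;> decide
        refine ⟨?_, hsupp⟩
        show (univ.filter fun l => r l ≠ 0).card = w
        rw [hsupp, hs]
    rw [key, Fintype.card_piFinset]
    have : ∀ l, (if l ∈ s then ({1,2} : Finset (ZMod 3)) else {0}).card
        = if l ∈ s then 2 else 1 := by
      intro l
      by_cases hl : l ∈ s <;> simp [hl] <;> decide
    rw [Finset.prod_congr rfl (fun l _ => this l),
      Finset.prod_ite (fun _ => 2) (fun _ => 1), Finset.prod_const, Finset.prod_const,
      Finset.filter_univ_mem, one_pow, mul_one, hs]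
  rw [Finset.sum_congr rfl hfib, Finset.sum_const, Finset.card_powersetCard, Finset.card_univ,
    Fintype.card_fin, smul_eq_mul]

lemma Kmul (A B : Matrix (ZMod 3) (ZMod 3) F2)
    (M N : Matrix (Fin m → ZMod 3) (Fin m → ZMod 3) F2)
    (hM : ∀ r c, M r c = ∏ l, A (r l) (c l)) (hN : ∀ r c, N r c = ∏ l, B (r l) (c l)) :
    ∀ r c, (M * N) r c = ∏ l, (A * B) (r l) (c l) := by
  intro r c
  rw [Matrix.mul_apply]
  have step : ∀ i, M r i * N i c = ∏ l, (A (r l) (i l) * B (i l) (c l)) := fun i => by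
    rw [hM, hN, Finset.prod_mul_distrib]
  rw [Finset.sum_congr rfl fun i _ => step i]
  have key := Finset.prod_univ_sum (fun _ : Fin m => (univ : Finset (ZMod 3)))
    (fun l x => A (r l) x * B x (c l))
  rw [Fintype.piFinset_univ] at key
  exact key.symm.trans (Finset.prod_congr rfl fun l _ => (Matrix.mul_apply).symm)

lemma A3four : A3 * (A3 * (A3 * A3)) = 1 := by decide

lemma A3pow_four : A3pow m * (A3pow m * (A3pow m * A3pow m)) = 1 := by
  have s1 := Kmul A3 A3 (A3pow m) (A3pow m) (fun _ _ => rfl) (fun _ _ => rfl)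
  have s2 := Kmul A3 (A3 * A3) (A3pow m) (A3pow m * A3pow m) (fun _ _ => rfl) s1
  have s3 := Kmul A3 (A3 * (A3 * A3)) (A3pow m) (A3pow m * (A3pow m * A3pow m))
    (fun _ _ => rfl) s2
  ext r c
  rw [s3, A3four]
  by_cases h : r = c
  · subst h
    rw [Matrix.one_apply_eq]
    exact Finset.prod_eq_one fun l _ => Matrix.one_apply_eq _
  · rw [Matrix.one_apply_ne h]
    obtain ⟨l, hl⟩ := Function.ne_iff.1 h
    exact Finset.prod_eq_zero (Finset.mem_univ l) (Matrix.one_apply_ne hl)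

lemma sum_smul_rows (c : (Fin m → ZMod 3) → F2) :
    ∑ r, c r • A3pow m r = Matrix.vecMul c (A3pow m) := by
  funext i
  rw [Finset.sum_apply]
  simp [Matrix.vecMul, dotProduct]

lemma exists_coeffs (a : (Fin m → ZMod 3) → F2) :
    a = ∑ r, (Matrix.vecMul a (A3pow m * (A3pow m * A3pow m))) r • A3pow m r := by
  rw [sum_smul_rows, Matrix.vecMul_vecMul,
    show A3pow m * (A3pow m * A3pow m) * A3pow m
      = A3pow m * (A3pow m * (A3pow m * A3pow m)) by noncomm_ring,
    A3pow_four, Matrix.vecMul_one]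

lemma rows_indep : LinearIndependent F2 (fun r => A3pow m r) := by
  rw [Fintype.linearIndependent_iff]
  intro c hc r
  have h0 : Matrix.vecMul c (A3pow m) = 0 := by rw [← sum_smul_rows]; exact hc
  have hc' : c = Matrix.vecMul (Matrix.vecMul c (A3pow m))
      (A3pow m * (A3pow m * A3pow m)) := by
    rw [Matrix.vecMul_vecMul, A3pow_four, Matrix.vecMul_one]
  rw [hc', h0, Matrix.zero_vecMul]
  rfl

lemma pow23_lt {u v : ℕ} (h : u < v) (hv : v ≤ m) :
    2 ^ v * 3 ^ (m - v) < 2 ^ u * 3 ^ (m - u) := by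
  have h2 : 2 ^ v = 2 ^ u * 2 ^ (v - u) := by rw [← pow_add]; congr 1; omega
  have h3 : 3 ^ (m - u) = 3 ^ (v - u) * 3 ^ (m - v) := by rw [← pow_add]; congr 1; omega
  have hlt : 2 ^ (v - u) < 3 ^ (v - u) := Nat.pow_lt_pow_left (by norm_num) (by omega)
  calc 2 ^ v * 3 ^ (m - v) = 2 ^ u * (2 ^ (v - u) * 3 ^ (m - v)) := by rw [h2]; ring
    _ < 2 ^ u * (3 ^ (v - u) * 3 ^ (m - v)) := by
        have hp : 0 < 2 ^ u := Nat.pow_pos (by norm_num)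
        have hq : 0 < 3 ^ (m - v) := Nat.pow_pos (by norm_num)
        have h5 : 2 ^ (v-u) * 3 ^ (m-v) < 3 ^ (v-u) * 3 ^ (m-v) :=
          Nat.mul_lt_mul_of_lt_of_le hlt (le_refl _) hq
        exact Nat.mul_lt_mul_of_le_of_lt (le_refl _) h5 hp
    _ = 2 ^ u * 3 ^ (m - u) := by rw [h3]

lemma weight_cond {r₁ r₂ : ℕ} (h1 : r₁ ≤ r₂) (h2 : r₂ ≤ m) (w : ℕ) (hw : w ≤ m) :
    (2 ^ r₂ * 3 ^ (m - r₂) ≤ 2 ^ w * 3 ^ (m - w)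
      ∧ 2 ^ w * 3 ^ (m - w) ≤ 2 ^ r₁ * 3 ^ (m - r₁)) ↔ (r₁ ≤ w ∧ w ≤ r₂) := by
  constructor
  · rintro ⟨ha, hb⟩
    constructor
    · by_contra hlt
      push_neg at hlt
      exact absurd hb (not_le.2 (pow23_lt hlt (le_trans h1 h2)))
    · by_contra hlt
      push_neg at hlt
      exact absurd ha (not_le.2 (pow23_lt hlt hw))
  · rintro ⟨ha, hb⟩
    constructor
    · rcases eq_or_lt_of_le hb with h | h
      · rw [h]
      · exact le_of_lt (pow23_lt h h2)
    · rcases eq_or_lt_of_le ha with h | h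
      · rw [← h]
      · exact le_of_lt (pow23_lt h hw)

lemma norm_neg (r : Fin m → ZMod 3) : hammingNorm (-r) = hammingNorm r := by
  unfold hammingNorm
  congr 1
  apply Finset.filter_congr
  intro l _
  simp

lemma mem_abelianCode {W : Finset ℕ} {a : (Fin m → ZMod 3) → F2} {α : F4} :
    a ∈ abelianCode m α W ↔ ∀ j, hammingNorm j ∉ W → dftL m α j a = 0 := by
  simp [abelianCode, Submodule.mem_iInf, LinearMap.mem_ker, Set.mem_setOf_eq]

end BiDAux

open BiDAux in
/-- The rows of `A3pow m` with Hamming weight in `[2^r₂·3^(m-r₂), 2^r₁·3^(m-r₁)]` span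
the BiD code `𝒜(m, {r₁,…,r₂})`, whose dimension is `∑_{w=r₁}^{r₂} C(m,w)·2^w`. -/
theorem BiD_span_and_dim (m r₁ r₂ : ℕ) (h1 : r₁ ≤ r₂) (h2 : r₂ ≤ m)
    (α : F4) (hα : orderOf α = 3) :
    BiD m r₁ r₂ = abelianCode m α (Finset.Icc r₁ r₂) ∧
    Module.finrank F2 (BiD m r₁ r₂) = ∑ w ∈ Finset.Icc r₁ r₂, m.choose w * 2^w := by
  have hset : {a : (Fin m → ZMod 3) → F2 | ∃ r, (2^r₂ * 3^(m-r₂) ≤ hammingNorm (A3pow m r) ∧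
        hammingNorm (A3pow m r) ≤ 2^r₁ * 3^(m-r₁)) ∧ a = A3pow m r}
      = Set.range (fun r : {r : Fin m → ZMod 3 // hammingNorm r ∈ Finset.Icc r₁ r₂} =>
          A3pow m r.1) := by
    ext a
    simp only [Set.mem_setOf_eq, Set.mem_range, Subtype.exists]
    constructor
    · rintro ⟨r, hb, rfl⟩
      rw [row_norm] at hb
      exact ⟨r, Finset.mem_Icc.2 ((weight_cond h1 h2 _ (norm_le r)).1 hb), rfl⟩
    · rintro ⟨r, hr, rfl⟩
      refine ⟨r, ?_, rfl⟩
      rw [row_norm]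
      exact (weight_cond h1 h2 _ (norm_le r)).2 (Finset.mem_Icc.1 hr)
  have hsub : BiD m r₁ r₂ ≤ abelianCode m α (Finset.Icc r₁ r₂) := by
    rw [BiD]
    apply Submodule.span_le.2
    rintro a ⟨r, hb, rfl⟩
    rw [SetLike.mem_coe, mem_abelianCode]
    intro j hj
    have hwr : hammingNorm r ∈ Finset.Icc r₁ r₂ := by
      rw [row_norm] at hb
      exact Finset.mem_Icc.2 ((weight_cond h1 h2 _ (norm_le r)).1 hb)
    exact dftL_row_zero hα (fun hEq => hj (hEq ▸ hwr))
  have hsup : abelianCode m α (Finset.Icc r₁ r₂) ≤ BiD m r₁ r₂ := by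
    intro a ha
    rw [mem_abelianCode] at ha
    set c := Matrix.vecMul a (A3pow m * (A3pow m * A3pow m)) with hc
    have hexp : a = ∑ r, c r • A3pow m r := exists_coeffs a
    have hzero : ∀ r₀ : Fin m → ZMod 3, hammingNorm r₀ ∉ Finset.Icc r₁ r₂ → c (-r₀) = 0 := by
      intro r₀ hr₀
      have hS0 : ∑ j ∈ Fintype.piFinset
            (fun l => if r₀ l = 0 then ({0}:Finset (ZMod 3)) else ({1,2}:Finset (ZMod 3))),
          α ^ (∑ l, r₀ l * j l).val * dftL m α j a = 0 := by
        apply Finset.sum_eq_zero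
        intro j hj
        have hnorm : hammingNorm j = hammingNorm r₀ := by
          unfold hammingNorm
          congr 1
          apply Finset.filter_congr
          intro l _
          rw [Fintype.mem_piFinset] at hj
          have hjl := hj l
          by_cases h0 : r₀ l = 0
          · rw [if_pos h0, Finset.mem_singleton] at hjl
            simp [hjl, h0]
          · rw [if_neg h0] at hjl
            have h12 : j l = 1 ∨ j l = 2 := by simpa using hjl
            have hjne : j l ≠ 0 := by
              rcases h12 with h | h <;> rw [h] <;> decide
            simp [hjne, h0]
        exact mul_eq_zero_of_right _ (ha j (by rw [hnorm]; exact hr₀))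
      have hSc : ∑ j ∈ Fintype.piFinset
            (fun l => if r₀ l = 0 then ({0}:Finset (ZMod 3)) else ({1,2}:Finset (ZMod 3))),
          α ^ (∑ l, r₀ l * j l).val * dftL m α j a
          = algebraMap F2 F4 (c (-r₀)) := by
        conv_lhs => rw [hexp]
        have hterm : ∀ j : Fin m → ZMod 3,
            α ^ (∑ l, r₀ l * j l).val * dftL m α j (∑ r, c r • A3pow m r)
            = ∑ r, c r • (α ^ (∑ l, r₀ l * j l).val * dftL m α j (A3pow m r)) := by
          intro j
          rw [map_sum, Finset.mul_sum]
          refine Finset.sum_congr rfl fun r _ => ?_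
          rw [LinearMap.map_smul, mul_smul_comm]
        rw [Finset.sum_congr rfl fun j _ => hterm j, Finset.sum_comm]
        have hinner : ∀ r : Fin m → ZMod 3, ∑ j ∈ Fintype.piFinset
              (fun l => if r₀ l = 0 then ({0}:Finset (ZMod 3)) else ({1,2}:Finset (ZMod 3))),
            c r • (α ^ (∑ l, r₀ l * j l).val * dftL m α j (A3pow m r))
            = c r • (if r = -r₀ then (1:F4) else 0) := by
          intro r
          rw [← Finset.smul_sum, weighted_row hα]
        rw [Finset.sum_congr rfl fun r _ => hinner r]
        have hite : ∀ r : Fin m → ZMod 3, c r • (if r = -r₀ then (1:F4) else 0)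
            = if r = -r₀ then c r • (1:F4) else 0 := by
          intro r
          split <;> simp
        rw [Finset.sum_congr rfl fun r _ => hite r, Finset.sum_ite_eq' univ (-r₀),
          if_pos (Finset.mem_univ _), Algebra.algebraMap_eq_smul_one]
      have h0 : algebraMap F2 F4 (c (-r₀)) = 0 := by rw [← hSc, hS0]
      exact (map_eq_zero_iff _ (RingHom.injective _)).1 h0
    rw [hexp]
    apply Submodule.sum_mem
    intro r _
    by_cases hr : hammingNorm r ∈ Finset.Icc r₁ r₂
    · apply Submodule.smul_mem
      apply Submodule.subset_span
      refine ⟨r, ?_, rfl⟩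
      rw [row_norm]
      exact (weight_cond h1 h2 _ (norm_le r)).2 (Finset.mem_Icc.1 hr)
    · have hcr : c r = 0 := by
        have h' := hzero (-r) (by rwa [BiDAux.norm_neg])
        rwa [neg_neg] at h'
      rw [hcr, zero_smul]
      exact Submodule.zero_mem _
  constructor
  · exact le_antisymm hsub hsup
  · have hind : LinearIndependent F2
        (fun r : {r : Fin m → ZMod 3 // hammingNorm r ∈ Finset.Icc r₁ r₂} => A3pow m r.1) :=
      rows_indep.comp Subtype.val Subtype.val_injective
    rw [BiD, hset, finrank_span_eq_card hind, Fintype.card_subtype,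
      Finset.card_eq_sum_card_fiberwise (f := hammingNorm) (t := Finset.Icc r₁ r₂)
        (s := univ.filter fun r : Fin m → ZMod 3 => hammingNorm r ∈ Finset.Icc r₁ r₂)
        (fun r hr => (Finset.mem_filter.1 hr).2)]
    refine Finset.sum_congr rfl fun w hw => ?_
    rw [Finset.filter_filter]
    have : (univ.filter fun r : Fin m → ZMod 3 =>
        hammingNorm r ∈ Finset.Icc r₁ r₂ ∧ hammingNorm r = w)
        = univ.filter fun r : Fin m → ZMod 3 => hammingNorm r = w := by
      apply Finset.filter_congr
      intro r _
      constructor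
      · exact And.right
      · intro h
        exact ⟨h ▸ hw, h⟩
    rw [this, count_norm]
end

section
/- For 0 ≤ r₁ ≤ r₂ ≤ m, the minimum distance of BiD(m,r₁,r₂) is at least max{ 4^{r₁}·3^{m−r₁−r₂}, 3^{m−r₂}·2^{r₁+r₂−m} } (rounded up to the nearest integer). -/
open Finset

/-! ### Auxiliary development -/

section Aux

/-- Companion matrix: the inverse of `A3`. -/
def B3 : Matrix (ZMod 3) (ZMod 3) F2 := !![1,1,1; 1,0,1; 1,1,0]

lemma A3_mul_B3 : A3 * B3 = 1 := by decide

def B3pow (m : ℕ) : Matrix (Fin m → ZMod 3) (Fin m → ZMod 3) F2 :=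
  fun r c => ∏ i, B3 (r i) (c i)

lemma A3pow_mul_B3pow (m : ℕ) : A3pow m * B3pow m = 1 := by
  ext r c
  rw [Matrix.mul_apply]
  simp only [A3pow, B3pow]
  calc ∑ x : Fin m → ZMod 3, (∏ i, A3 (r i) (x i)) * ∏ i, B3 (x i) (c i)
      = ∑ x : Fin m → ZMod 3, ∏ i, (A3 (r i) (x i) * B3 (x i) (c i)) := by
        simp [Finset.prod_mul_distrib]
    _ = ∏ i, ∑ s : ZMod 3, (A3 (r i) s * B3 s (c i)) := by
        rw [Finset.prod_univ_sum]
        apply Finset.sum_congr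
        · simp [Fintype.piFinset_univ]
        · intros; rfl
    _ = ∏ i, (A3 * B3) (r i) (c i) := by simp [Matrix.mul_apply]
    _ = (1 : Matrix (Fin m → ZMod 3) (Fin m → ZMod 3) F2) r c := by
        rw [A3_mul_B3]
        simp only [Matrix.one_apply]
        rw [Finset.prod_boole]
        simp [funext_iff]

lemma rows_sum_eq {m : ℕ} (f : (Fin m → ZMod 3) → F2) :
    (∑ r, f r • A3pow m r) = Matrix.vecMul f (A3pow m) := by
  ext x
  simp [Matrix.vecMul, dotProduct, Finset.sum_apply]

lemma rows_indep {m : ℕ} (f g : (Fin m → ZMod 3) → F2)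
    (h : (∑ r, f r • A3pow m r) = ∑ r, g r • A3pow m r) : f = g := by
  rw [rows_sum_eq, rows_sum_eq] at h
  have h2 := congrArg (fun v => Matrix.vecMul v (B3pow m)) h
  simpa [Matrix.vecMul_vecMul, A3pow_mul_B3pow] using h2

/-- The span of the rows of `A3pow m` whose index has Hamming weight in `[a, b]`. -/
def Kc (m a b : ℕ) : Submodule F2 ((Fin m → ZMod 3) → F2) :=
  Submodule.span F2 {x | ∃ r, (a ≤ hammingNorm r ∧ hammingNorm r ≤ b) ∧ x = A3pow m r}

lemma mem_Kc_iff {m a b : ℕ} {c : (Fin m → ZMod 3) → F2} :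
    c ∈ Kc m a b ↔ ∃ f : (Fin m → ZMod 3) → F2,
      (∀ r, f r ≠ 0 → a ≤ hammingNorm r ∧ hammingNorm r ≤ b) ∧
      c = ∑ r, f r • A3pow m r := by
  constructor
  · intro hc
    have hset : {x | ∃ r, (a ≤ hammingNorm r ∧ hammingNorm r ≤ b) ∧ x = A3pow m r}
        = Set.range (fun r : {r : Fin m → ZMod 3 // a ≤ hammingNorm r ∧ hammingNorm r ≤ b} =>
            A3pow m r.1) := by
      ext x
      constructor
      · rintro ⟨r, hr, rfl⟩; exact ⟨⟨r, hr⟩, rfl⟩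
      · rintro ⟨⟨r, hr⟩, rfl⟩; exact ⟨r, hr, rfl⟩
    rw [Kc, hset, Submodule.mem_span_range_iff_exists_fun F2] at hc
    obtain ⟨f0, hf0⟩ := hc
    classical
    refine ⟨fun r => if h : a ≤ hammingNorm r ∧ hammingNorm r ≤ b then f0 ⟨r, h⟩ else 0,
      fun r hr => by by_contra h; simp [h] at hr, ?_⟩
    rw [← hf0]
    have key : ∀ r : Fin m → ZMod 3,
        (if h : a ≤ hammingNorm r ∧ hammingNorm r ≤ b then f0 ⟨r, h⟩ else 0) • A3pow m r
        = (if h : a ≤ hammingNorm r ∧ hammingNorm r ≤ b then f0 ⟨r, h⟩ • A3pow m r else 0) := by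
      intro r; split_ifs <;> simp
    rw [Finset.sum_congr rfl (fun r _ => key r), Finset.sum_dite]
    simp only [Finset.sum_const_zero, add_zero]
    refine Fintype.sum_equiv (Equiv.subtypeEquivRight (fun x => by simp)) _ _ (fun x => ?_)
    rfl
  · rintro ⟨f, hf, rfl⟩
    apply Submodule.sum_mem
    intro r _
    by_cases h : f r = 0
    · simp [h]
    · exact Submodule.smul_mem _ _ (Submodule.subset_span ⟨r, hf r h, rfl⟩)

lemma Kc_mono {m a b a' b' : ℕ} (ha : a' ≤ a) (hb : b ≤ b') : Kc m a b ≤ Kc m a' b' := by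
  apply Submodule.span_mono
  rintro x ⟨r, ⟨h1, h2⟩, rfl⟩
  exact ⟨r, ⟨le_trans ha h1, le_trans h2 hb⟩, rfl⟩

lemma Kc_inter {m a b a' b' : ℕ} {c : (Fin m → ZMod 3) → F2}
    (h1 : c ∈ Kc m a b) (h2 : c ∈ Kc m a' b') : c ∈ Kc m (max a a') (min b b') := by
  rw [mem_Kc_iff] at h1 h2 ⊢
  obtain ⟨f, hf, hcf⟩ := h1
  obtain ⟨g, hg, hcg⟩ := h2
  have : f = g := rows_indep f g (hcf ▸ hcg)
  subst this
  exact ⟨f, fun r hr => ⟨max_le (hf r hr).1 (hg r hr).1,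
    le_min (hf r hr).2 (hg r hr).2⟩, hcf⟩

/-! ### Hamming-weight lemmas -/

lemma wt_eq_sum {ι : Type*} [Fintype ι] {α : Type*} [DecidableEq α] [Zero α] (y : ι → α) :
    hammingNorm y = ∑ i, if y i ≠ 0 then 1 else 0 := by
  rw [hammingNorm, Finset.card_filter]

lemma wt_cons {n : ℕ} {α : Type*} [DecidableEq α] [Zero α] (t : α) (r : Fin n → α) :
    hammingNorm (Fin.cons t r : Fin (n+1) → α)
      = (if t ≠ 0 then 1 else 0) + hammingNorm r := by
  rw [wt_eq_sum, wt_eq_sum, Fin.sum_univ_succ]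
  simp [Fin.cons_zero, Fin.cons_succ]

lemma wt_cons_zero {n : ℕ} (r : Fin n → ZMod 3) :
    hammingNorm (Fin.cons (0 : ZMod 3) r : Fin (n+1) → ZMod 3) = hammingNorm r := by
  rw [wt_cons]; simp

lemma wt_cons_ne {n : ℕ} {t : ZMod 3} (ht : t ≠ 0) (r : Fin n → ZMod 3) :
    hammingNorm (Fin.cons t r : Fin (n+1) → ZMod 3) = hammingNorm r + 1 := by
  rw [wt_cons]; simp [ht]; omega

lemma wt_blocks {m : ℕ} (c : (Fin (m+1) → ZMod 3) → F2) :
    hammingNorm c = ∑ s : ZMod 3, hammingNorm (fun x' : Fin m → ZMod 3 => c (Fin.cons s x')) := by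
  classical
  rw [hammingNorm, Finset.card_filter]
  rw [← Equiv.sum_comp (Fin.consEquiv (fun _ : Fin (m+1) => ZMod 3))
    (fun x => if c x ≠ 0 then 1 else 0)]
  rw [Fintype.sum_prod_type]
  refine Finset.sum_congr rfl (fun s _ => ?_)
  rw [wt_eq_sum]
  rfl

lemma wt_triangle {m : ℕ} (u v : (Fin m → ZMod 3) → F2) :
    hammingNorm (u + v) ≤ hammingNorm u + hammingNorm v := by
  classical
  have h := hammingDist_triangle (u + v) v (0 : (Fin m → ZMod 3) → F2)
  rw [hammingDist_zero_right] at h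
  refine le_trans h (Nat.add_le_add_right (le_of_eq ?_) _)
  rw [hammingDist, hammingNorm]
  congr 1
  apply Finset.filter_congr
  intro x _
  simp [add_eq_right]

lemma F2_add_self {m : ℕ} (u : (Fin m → ZMod 3) → F2) : u + u = 0 := by
  funext x
  exact CharTwo.add_self_eq_zero _

lemma eq_of_add_eq_zero {m : ℕ} {u v : (Fin m → ZMod 3) → F2} (h : u + v = 0) : u = v := by
  have := congrArg (· + v) h
  simpa [add_assoc, F2_add_self] using this


noncomputable def E (a b : ℤ) : ℝ := (2:ℝ)^a * (3:ℝ)^b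

lemma E_pos (a b : ℤ) : 0 < E a b :=
  mul_pos (zpow_pos (by norm_num) a) (zpow_pos (by norm_num) b)

lemma E_pivot (a b c d : ℤ) : E a b = ((2:ℝ)^(a-c) * (3:ℝ)^(b-d)) * E c d := by
  unfold E
  rw [mul_mul_mul_comm, ← zpow_add₀ (by norm_num : (2:ℝ) ≠ 0),
    ← zpow_add₀ (by norm_num : (3:ℝ) ≠ 0), sub_add_cancel, sub_add_cancel]

lemma E_le_mul {a b c d : ℤ} {k : ℝ} (h : (2:ℝ)^(a-c) * (3:ℝ)^(b-d) ≤ k) :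
    E a b ≤ k * E c d := by
  rw [E_pivot a b c d]
  exact mul_le_mul_of_nonneg_right h (E_pos c d).le

noncomputable def Dr (m r₁ r₂ : ℕ) : ℝ :=
  max ((4:ℝ)^(r₁:ℤ) * (3:ℝ)^((m:ℤ) - r₁ - r₂)) ((3:ℝ)^((m:ℤ) - r₂) * (2:ℝ)^((r₁:ℤ) + r₂ - m))

lemma Dr_eq (m r₁ r₂ : ℕ) :
    Dr m r₁ r₂ = max (E (2*r₁) ((m:ℤ) - r₁ - r₂)) (E ((r₁:ℤ) + r₂ - m) ((m:ℤ) - r₂)) := by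
  unfold Dr E
  congr 1
  · have h4 : (4:ℝ) = (2:ℝ)^(2:ℤ) := by norm_num
    rw [h4, ← zpow_mul]
  · rw [mul_comm]

lemma Dr_pos (m r₁ r₂ : ℕ) : 0 < Dr m r₁ r₂ := by
  rw [Dr_eq]
  exact lt_max_of_lt_left (E_pos _ _)

lemma E_le_mul' (p q : ℤ) {a b c d : ℤ} {k : ℝ} (hp : a - c = p) (hq : b - d = q)
    (h : (2:ℝ)^p * (3:ℝ)^q ≤ k) : E a b ≤ k * E c d := by
  apply E_le_mul; rw [hp, hq]; exact h

lemma E_eq' (p q : ℤ) {a b c d : ℤ} (hp : a - c = p) (hq : b - d = q) :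
    E a b = ((2:ℝ)^p * (3:ℝ)^q) * E c d := by
  rw [← hp, ← hq]; exact E_pivot a b c d

lemma le_mul_max_left {x u v : ℝ} (k : ℝ) (hk : 0 ≤ k) (h : x ≤ k * u) :
    x ≤ k * max u v :=
  le_trans h (mul_le_mul_of_nonneg_left (le_max_left u v) hk)

lemma le_mul_max_right {x u v : ℝ} (k : ℝ) (hk : 0 ≤ k) (h : x ≤ k * v) :
    x ≤ k * max u v :=
  le_trans h (mul_le_mul_of_nonneg_left (le_max_right u v) hk)

lemma A1 (m r₁ r₂ : ℕ) : Dr (m+1) r₁ r₂ ≤ 3 * Dr m r₁ r₂ := by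
  rw [Dr_eq, Dr_eq]
  apply max_le
  · exact le_mul_max_left 3 (by norm_num)
      (E_le_mul' 0 1 (by ring) (by push_cast; try ring) (by norm_num))
  · exact le_mul_max_right 3 (by norm_num)
      (E_le_mul' (-1) 1 (by push_cast; try ring) (by push_cast; try ring) (by norm_num))

lemma A2 (m r₁ s : ℕ) : Dr (m+1) r₁ (s+1) ≤ 2 * Dr m (r₁-1) s := by
  rcases r₁ with _ | k
  · simp only [Nat.zero_sub]
    rw [Dr_eq, Dr_eq]
    apply max_le
    · exact le_mul_max_left 2 (by norm_num)
        (E_le_mul' 0 0 (by push_cast; try ring) (by push_cast; try ring) (by norm_num))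
    · exact le_mul_max_right 2 (by norm_num)
        (E_le_mul' 0 0 (by push_cast; try ring) (by push_cast; try ring) (by norm_num))
  · simp only [Nat.add_sub_cancel]
    rw [Dr_eq, Dr_eq]
    apply max_le
    · exact le_mul_max_left 2 (by norm_num)
        (E_le_mul' 2 (-1) (by push_cast; try ring) (by push_cast; try ring) (by norm_num))
    · exact le_mul_max_right 2 (by norm_num)
        (E_le_mul' 1 0 (by push_cast; try ring) (by push_cast; try ring) (by norm_num))

lemma A3L (m r₁ s : ℕ) : Dr (m+1) r₁ (s+1) ≤ Dr m r₁ s := by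
  apply le_of_eq
  rw [Dr_eq, Dr_eq]
  congr 1 <;> · congr 1 <;> (push_cast; try ring)

noncomputable def DrZ (M R S : ℤ) : ℝ :=
  max (E (2*R) (M - R - S)) (E (R + S - M) (M - S))

lemma Dr_eq_DrZ (m r₁ r₂ : ℕ) : Dr m r₁ r₂ = DrZ m r₁ r₂ := by
  rw [Dr_eq, DrZ]

lemma E_expand (c d : ℤ) (p q : ℤ) {a b : ℤ} (hp : a - c = p) (hq : b - d = q) :
    E a b = ((2:ℝ)^p * (3:ℝ)^q) * E c d := by
  rw [← hp, ← hq]; exact E_pivot a b c d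

lemma E_add_le (c d p q p₁ q₁ p₂ q₂ : ℤ) (k₂ : ℝ) {a b a₁ b₁ a₂ b₂ : ℤ}
    (ha : a - c = p) (hb : b - d = q) (ha1 : a₁ - c = p₁) (hb1 : b₁ - d = q₁)
    (ha2 : a₂ - c = p₂) (hb2 : b₂ - d = q₂)
    (hk : (2:ℝ)^p * 3^q ≤ 2^p₁*3^q₁ + k₂ * (2^p₂*3^q₂)) :
    E a b ≤ E a₁ b₁ + k₂ * E a₂ b₂ := by
  rw [E_expand c d p q ha hb, E_expand c d p₁ q₁ ha1 hb1, E_expand c d p₂ q₂ ha2 hb2]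
  have h := E_pos c d
  nlinarith [h]

lemma E_add_le' (c d p q p₁ q₁ p₂ q₂ : ℤ) {a b a₁ b₁ a₂ b₂ : ℤ}
    (ha : a - c = p) (hb : b - d = q) (ha1 : a₁ - c = p₁) (hb1 : b₁ - d = q₁)
    (ha2 : a₂ - c = p₂) (hb2 : b₂ - d = q₂)
    (hk : (2:ℝ)^p * 3^q ≤ 2^p₁*3^q₁ + 2^p₂*3^q₂) :
    E a b ≤ E a₁ b₁ + E a₂ b₂ := by
  rw [E_expand c d p q ha hb, E_expand c d p₁ q₁ ha1 hb1, E_expand c d p₂ q₂ ha2 hb2]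
  have h := E_pos c d
  nlinarith [h]

lemma Z1 (M R S : ℤ) : DrZ (M+1) R S ≤ 3 * DrZ M R S := by
  unfold DrZ
  apply max_le
  · exact le_mul_max_left 3 (by norm_num) (E_le_mul' 0 1 (by ring) (by ring) (by norm_num))
  · exact le_mul_max_right 3 (by norm_num) (E_le_mul' (-1) 1 (by ring) (by ring) (by norm_num))

lemma Z2 (M R A S : ℤ) (hA : (R = 0 ∧ A = 0) ∨ A = R - 1) :
    DrZ (M+1) R (S+1) ≤ 2 * DrZ M A S := by
  unfold DrZ
  rcases hA with ⟨h1, h2⟩ | h1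
  · subst h1; subst h2
    apply max_le
    · exact le_mul_max_left 2 (by norm_num) (E_le_mul' 0 0 (by ring) (by ring) (by norm_num))
    · exact le_mul_max_right 2 (by norm_num) (E_le_mul' 0 0 (by ring) (by ring) (by norm_num))
  · subst h1
    apply max_le
    · exact le_mul_max_left 2 (by norm_num) (E_le_mul' 2 (-1) (by ring) (by ring) (by norm_num))
    · exact le_mul_max_right 2 (by norm_num) (E_le_mul' 1 0 (by ring) (by ring) (by norm_num))

lemma Z3 (M R S : ℤ) : DrZ (M+1) R (S+1) = DrZ M R S := by
  unfold DrZ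
  congr 1 <;> · congr 1 <;> ring

lemma Z45 (M R A S : ℤ) (hA : (R = 0 ∧ A = 0) ∨ A = R - 1) :
    DrZ (M+1) R (S+1) ≤
      max (DrZ M A (S+1) + DrZ M A S) (DrZ M R (S+1) + 2 * DrZ M A (S+1)) := by
  unfold DrZ
  have hPadd : E (2*R) (M+1-R-(S+1)) ≤ E (2*A) (M-A-(S+1)) + E (2*A) (M-A-S) := by
    rcases hA with ⟨h1, h2⟩ | h1
    · subst h1; subst h2
      exact E_add_le' (0 : ℤ) (M-S-1) 0 1 0 0 0 1
        (by ring) (by ring) (by ring) (by ring) (by ring) (by ring) (by norm_num)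
    · subst h1
      exact E_add_le' (2*R-2) (M-R-S) 2 0 0 0 0 1
        (by ring) (by ring) (by ring) (by ring) (by ring) (by ring) (by norm_num)
  have hQadd : E (R+(S+1)-(M+1)) (M+1-(S+1)) ≤
      E (R+(S+1)-M) (M-(S+1)) + 2 * E (A+(S+1)-M) (M-(S+1)) := by
    rcases hA with ⟨h1, h2⟩ | h1
    · subst h1; subst h2
      refine E_add_le (S-M) (M-S-1) 0 1 1 0 1 0 2 ?_ ?_ ?_ ?_ ?_ ?_ ?_ <;>
        (first | ring1 | norm_num)
    · subst h1
      refine E_add_le (R+S-M) (M-S-1) 0 1 1 0 0 0 2 ?_ ?_ ?_ ?_ ?_ ?_ ?_ <;>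
        (first | ring1 | norm_num)
  apply max_le
  · exact le_max_of_le_left (le_trans hPadd (add_le_add (le_max_left _ _) (le_max_left _ _)))
  · exact le_max_of_le_right (le_trans hQadd (add_le_add (le_max_right _ _)
      (mul_le_mul_of_nonneg_left (le_max_right _ _) (by norm_num))))

lemma Z6 (M R A S : ℤ) (hA : (R = 0 ∧ A = 0) ∨ A = R - 1) :
    DrZ (M+1) R (S+1) ≤
      max (3 * DrZ M A (S+1)) (DrZ M A (S+1) + DrZ M A S) := by
  unfold DrZ
  apply max_le
  · -- P component
    apply le_max_of_le_right
    have hPadd : E (2*R) (M+1-R-(S+1)) ≤ E (2*A) (M-A-(S+1)) + E (2*A) (M-A-S) := by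
      rcases hA with ⟨h1, h2⟩ | h1
      · subst h1; subst h2
        exact E_add_le' (0 : ℤ) (M-S-1) 0 1 0 0 0 1
          (by ring) (by ring) (by ring) (by ring) (by ring) (by ring) (by norm_num)
      · subst h1
        exact E_add_le' (2*R-2) (M-R-S) 2 0 0 0 0 1
          (by ring) (by ring) (by ring) (by ring) (by ring) (by ring) (by norm_num)
    exact le_trans hPadd (add_le_add (le_max_left _ _) (le_max_left _ _))
  · -- Q component
    rcases le_total (E (2*A) (M-A-(S+1))) (E (A+(S+1)-M) (M-(S+1))) with hc | hc
    · apply le_max_of_le_left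
      refine le_mul_max_right 3 (by norm_num) ?_
      rcases hA with ⟨h1, h2⟩ | h1
      · subst h1; subst h2
        exact E_le_mul' (-1) 1 (by ring) (by ring) (by norm_num)
      · subst h1
        exact E_le_mul' 0 1 (by ring) (by ring) (by norm_num)
    · apply le_max_of_le_right
      have key : E (R+(S+1)-(M+1)) (M+1-(S+1)) ≤
          E (2*A) (M-A-(S+1)) + E (2*A) (M-A-S) := by
        have h3 : E (R+(S+1)-(M+1)) (M+1-(S+1)) ≤ 3 * E (A+(S+1)-M) (M-(S+1)) := by
          rcases hA with ⟨h1, h2⟩ | h1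
          · subst h1; subst h2
            exact E_le_mul' (-1) 1 (by ring) (by ring) (by norm_num)
          · subst h1
            exact E_le_mul' 0 1 (by ring) (by ring) (by norm_num)
        have h4 : E (2*A) (M-A-S) = ((2:ℝ)^(0:ℤ) * (3:ℝ)^(1:ℤ)) * E (2*A) (M-A-(S+1)) :=
          E_expand _ _ 0 1 (by ring) (by ring)
        have h5 := E_pos (2*A) (M-A-(S+1))
        have h6 := E_pos (A+(S+1)-M) (M-(S+1))
        have h7 : ((2:ℝ)^(0:ℤ) * (3:ℝ)^(1:ℤ)) = 3 := by norm_num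
        rw [h4, h7]
        linarith [h3, hc, h5]
      exact le_trans key (add_le_add (le_max_left _ _) (le_max_left _ _))

lemma Dr_base (r₂ : ℕ) : Dr 0 0 r₂ ≤ 1 := by
  classical
  rw [Dr_eq]
  have h1 : ((0:ℕ):ℤ) - ((0:ℕ):ℤ) - ((r₂:ℕ):ℤ) = -(r₂:ℤ) := by push_cast; ring
  have h2 : (((0:ℕ)):ℤ) + ((r₂:ℕ):ℤ) - ((0:ℕ):ℤ) = (r₂:ℤ) := by push_cast; ring
  have h3 : (2*((0:ℕ):ℤ)) = (0:ℤ) := by norm_num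
  have h4 : ((0:ℕ):ℤ) - ((r₂:ℕ):ℤ) = -(r₂:ℤ) := by push_cast; ring
  rw [h1, h2, h3, h4]
  have hp : (0:ℝ) < (3:ℝ)^(r₂:ℕ) := by positivity
  have hle : (2:ℝ)^(r₂:ℕ) ≤ (3:ℝ)^(r₂:ℕ) := pow_le_pow_left₀ (by norm_num) (by norm_num) r₂
  apply max_le
  · unfold E
    rw [zpow_zero, one_mul, zpow_neg, zpow_natCast]
    rw [inv_le_one_iff₀]
    right
    exact one_le_pow₀ (by norm_num)

  · unfold E
    rw [zpow_neg, zpow_natCast, zpow_natCast]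
    calc (2:ℝ)^(r₂:ℕ) * ((3:ℝ)^(r₂:ℕ))⁻¹ ≤ (3:ℝ)^(r₂:ℕ) * ((3:ℝ)^(r₂:ℕ))⁻¹ := by
          apply mul_le_mul_of_nonneg_right hle
          positivity
      _ = 1 := mul_inv_cancel₀ (ne_of_gt hp)

lemma sum_zmod3 {M : Type*} [AddCommMonoid M] (g : ZMod 3 → M) :
    ∑ s, g s = g 0 + g 1 + g 2 := by
  have h : (univ : Finset (ZMod 3)) = {0, 1, 2} := by decide
  rw [h, Finset.sum_insert (by decide), Finset.sum_insert (by decide),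
    Finset.sum_singleton, add_assoc]

lemma blocks_eq {m : ℕ} (f : (Fin (m+1) → ZMod 3) → F2) (s : ZMod 3)
    (x' : Fin m → ZMod 3) :
    (∑ r, f r • A3pow (m+1) r) (Fin.cons s x')
      = ∑ t : ZMod 3, A3 t s * ((∑ r', f (Fin.cons t r') • A3pow m r') x') := by
  simp only [Finset.sum_apply, Pi.smul_apply, smul_eq_mul, Finset.mul_sum]
  rw [← Equiv.sum_comp (Fin.consEquiv (fun _ : Fin (m+1) => ZMod 3))
    (fun r => f r * A3pow (m+1) r (Fin.cons s x')), Fintype.sum_prod_type]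
  refine Finset.sum_congr rfl (fun t _ => Finset.sum_congr rfl (fun r' _ => ?_))
  show f (Fin.cons t r') * A3pow (m+1) (Fin.cons t r') (Fin.cons s x')
      = A3 t s * (f (Fin.cons t r') * A3pow m r' x')
  have : A3pow (m+1) (Fin.cons t r') (Fin.cons s x') = A3 t s * A3pow m r' x' := by
    rw [A3pow, A3pow, Fin.prod_univ_succ]
    simp [Fin.cons_zero, Fin.cons_succ]
  rw [this]; ring

lemma decomp {m : ℕ} (f : (Fin (m+1) → ZMod 3) → F2) (s : ZMod 3) :
    (fun x' => (∑ r, f r • A3pow (m+1) r) (Fin.cons s x'))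
      = A3 0 s • (∑ r' : Fin m → ZMod 3, f (Fin.cons 0 r') • A3pow m r')
      + A3 1 s • (∑ r' : Fin m → ZMod 3, f (Fin.cons 1 r') • A3pow m r')
      + A3 2 s • (∑ r' : Fin m → ZMod 3, f (Fin.cons 2 r') • A3pow m r') := by
  funext x'
  rw [blocks_eq f s x', sum_zmod3 (fun t => A3 t s * ((∑ r', f (Fin.cons t r') • A3pow m r') x'))]
  simp [Pi.add_apply, Pi.smul_apply, smul_eq_mul]

lemma decomp_wt {m : ℕ} (f : (Fin (m+1) → ZMod 3) → F2) :
    hammingNorm (∑ r, f r • A3pow (m+1) r)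
      = hammingNorm ((∑ r' : Fin m → ZMod 3, f (Fin.cons 0 r') • A3pow m r')
          + (∑ r' : Fin m → ZMod 3, f (Fin.cons 1 r') • A3pow m r')
          + (∑ r' : Fin m → ZMod 3, f (Fin.cons 2 r') • A3pow m r'))
      + hammingNorm ((∑ r' : Fin m → ZMod 3, f (Fin.cons 0 r') • A3pow m r')
          + (∑ r' : Fin m → ZMod 3, f (Fin.cons 1 r') • A3pow m r'))
      + hammingNorm ((∑ r' : Fin m → ZMod 3, f (Fin.cons 0 r') • A3pow m r')
          + (∑ r' : Fin m → ZMod 3, f (Fin.cons 2 r') • A3pow m r')) := by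
  rw [wt_blocks, sum_zmod3]
  congr 2
  · rw [decomp f 0]
    have h0 : A3 0 0 = 1 := by decide
    have h1 : A3 1 0 = 1 := by decide
    have h2 : A3 2 0 = 1 := by decide
    rw [h0, h1, h2, one_smul, one_smul, one_smul]
  · rw [decomp f 1]
    have h0 : A3 0 1 = 1 := by decide
    have h1 : A3 1 1 = 1 := by decide
    have h2 : A3 2 1 = 0 := by decide
    rw [h0, h1, h2, one_smul, one_smul, zero_smul, add_zero]
  · rw [decomp f 2]
    have h0 : A3 0 2 = 1 := by decide
    have h1 : A3 1 2 = 0 := by decide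
    have h2 : A3 2 2 = 1 := by decide
    rw [h0, h1, h2, one_smul, zero_smul, one_smul, add_zero]

lemma decomp_zero {m : ℕ} (f : (Fin (m+1) → ZMod 3) → F2)
    (h0 : (∑ r' : Fin m → ZMod 3, f (Fin.cons 0 r') • A3pow m r') = 0)
    (h1 : (∑ r' : Fin m → ZMod 3, f (Fin.cons 1 r') • A3pow m r') = 0)
    (h2 : (∑ r' : Fin m → ZMod 3, f (Fin.cons 2 r') • A3pow m r') = 0) :
    (∑ r, f r • A3pow (m+1) r) = 0 := by
  funext x
  have hx : Fin.cons (x 0) (Fin.tail x) = x := Fin.cons_self_tail x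
  have h := congrFun (decomp f (x 0)) (Fin.tail x)
  rw [hx] at h
  rw [h, h0, h1, h2]
  simp

/-! ### Bridging the arithmetic lemmas to `ℕ` parameters -/

lemma hA_gen (r₁ : ℕ) :
    (((r₁:ℕ):ℤ) = 0 ∧ ((r₁-1 : ℕ):ℤ) = 0) ∨ ((r₁-1:ℕ):ℤ) = ((r₁:ℕ):ℤ) - 1 := by omega

lemma N1 (m r₁ r₂ : ℕ) : Dr (m+1) r₁ r₂ ≤ 3 * Dr m r₁ r₂ := by
  rw [Dr_eq_DrZ, Dr_eq_DrZ]
  push_cast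
  exact Z1 _ _ _

lemma N2 (m r₁ s : ℕ) : Dr (m+1) r₁ (s+1) ≤ 2 * Dr m (r₁-1) s := by
  rw [Dr_eq_DrZ, Dr_eq_DrZ]
  push_cast
  exact Z2 _ _ _ _ (hA_gen r₁)

lemma N3 (m r₁ s : ℕ) : Dr (m+1) r₁ (s+1) ≤ Dr m r₁ s := by
  rw [Dr_eq_DrZ, Dr_eq_DrZ]
  push_cast
  exact le_of_eq (Z3 _ _ _)

lemma N45 (m r₁ s : ℕ) : Dr (m+1) r₁ (s+1) ≤
    max (Dr m (r₁-1) (s+1) + Dr m (r₁-1) s) (Dr m r₁ (s+1) + 2 * Dr m (r₁-1) (s+1)) := by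
  rw [Dr_eq_DrZ, Dr_eq_DrZ, Dr_eq_DrZ, Dr_eq_DrZ]
  push_cast
  exact Z45 _ _ _ _ (hA_gen r₁)

lemma N6 (m r₁ s : ℕ) : Dr (m+1) r₁ (s+1) ≤
    max (3 * Dr m (r₁-1) (s+1)) (Dr m (r₁-1) (s+1) + Dr m (r₁-1) s) := by
  rw [Dr_eq_DrZ, Dr_eq_DrZ, Dr_eq_DrZ]
  push_cast
  exact Z6 _ _ _ _ (hA_gen r₁)

/-! ### The main lower bound by induction -/

lemma main_bound : ∀ (m r₁ r₂ : ℕ) (c : (Fin m → ZMod 3) → F2),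
    c ∈ Kc m r₁ r₂ → c ≠ 0 → Dr m r₁ r₂ ≤ (hammingNorm c : ℝ) := by
  intro m
  induction m with
  | zero =>
    intro r₁ r₂ c hc hc0
    rcases mem_Kc_iff.mp hc with ⟨f, hf, rfl⟩
    have hne : ∃ r, f r ≠ 0 := by
      by_contra h
      push_neg at h
      exact hc0 (Finset.sum_eq_zero fun r _ => by rw [h r, zero_smul])
    obtain ⟨r0, hr0⟩ := hne
    have hwt0 : hammingNorm r0 = 0 := by
      rw [wt_eq_sum]
      exact Finset.sum_of_isEmpty _
    have hr1 : r₁ = 0 := by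
      have := (hf r0 hr0).1
      omega
    subst hr1
    have hpos : 0 < hammingNorm (∑ r, f r • A3pow 0 r) := hammingNorm_pos_iff.mpr hc0
    have h1 : (1:ℝ) ≤ (hammingNorm (∑ r, f r • A3pow 0 r) : ℝ) := by exact_mod_cast hpos
    exact le_trans (Dr_base r₂) h1
  | succ m IH =>
    intro r₁ r₂ c hc hc0
    rcases mem_Kc_iff.mp hc with ⟨f, hf, rfl⟩
    obtain ⟨u, hu⟩ : ∃ x, x = (∑ r' : Fin m → ZMod 3, f (Fin.cons 0 r') • A3pow m r') := ⟨_, rfl⟩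
    obtain ⟨v, hv⟩ : ∃ x, x = (∑ r' : Fin m → ZMod 3, f (Fin.cons 1 r') • A3pow m r') := ⟨_, rfl⟩
    obtain ⟨w, hw⟩ : ∃ x, x = (∑ r' : Fin m → ZMod 3, f (Fin.cons 2 r') • A3pow m r') := ⟨_, rfl⟩
    have hwt : hammingNorm (∑ r, f r • A3pow (m+1) r)
        = hammingNorm (u + v + w) + hammingNorm (u + v) + hammingNorm (u + w) := by
      rw [hu, hv, hw]; exact decomp_wt f
    have hwtR : ((hammingNorm (∑ r, f r • A3pow (m+1) r)) : ℝ)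
        = (hammingNorm (u + v + w) : ℝ) + hammingNorm (u + v) + hammingNorm (u + w) := by
      exact_mod_cast hwt
    have hnz : ¬ (u = 0 ∧ v = 0 ∧ w = 0) := by
      rintro ⟨h0, h1, h2⟩
      exact hc0 (decomp_zero f (hu ▸ h0) (hv ▸ h1) (hw ▸ h2))
    have hu_mem : u ∈ Kc m r₁ r₂ := by
      rw [hu]
      refine mem_Kc_iff.mpr ⟨fun r' => f (Fin.cons 0 r'), fun r' h => ?_, rfl⟩
      have := hf _ h
      rwa [wt_cons_zero] at this
    -- triangle facts in ℝ
    have t1 : (hammingNorm v : ℝ) ≤ hammingNorm (u + v) + hammingNorm u := by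
      have h : v = (u + v) + u := by
        rw [add_comm u v, add_assoc, F2_add_self, add_zero]
      calc (hammingNorm v : ℝ) = hammingNorm ((u + v) + u) := by rw [← h]
        _ ≤ _ := by exact_mod_cast wt_triangle (u+v) u
    have t2 : (hammingNorm w : ℝ) ≤ hammingNorm (u + w) + hammingNorm u := by
      have h : w = (u + w) + u := by
        rw [add_comm u w, add_assoc, F2_add_self, add_zero]
      calc (hammingNorm w : ℝ) = hammingNorm ((u + w) + u) := by rw [← h]
        _ ≤ _ := by exact_mod_cast wt_triangle (u+w) u
    rcases r₂ with _ | s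
    · -- r₂ = 0 : all coefficients with nonzero last coordinate vanish, so v = w = 0
      have hv0 : v = 0 := by
        rw [hv]
        apply Finset.sum_eq_zero
        intro r' _
        have hz : f (Fin.cons 1 r') = 0 := by
          by_contra h
          have h2 := (hf _ h).2
          rw [wt_cons_ne (by decide) r'] at h2
          omega
        rw [hz, zero_smul]
      have hw0 : w = 0 := by
        rw [hw]
        apply Finset.sum_eq_zero
        intro r' _
        have hz : f (Fin.cons 2 r') = 0 := by
          by_contra h
          have h2 := (hf _ h).2
          rw [wt_cons_ne (by decide) r'] at h2
          omega
        rw [hz, zero_smul]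
      have hu0 : u ≠ 0 := fun h => hnz ⟨h, hv0, hw0⟩
      have ihu := IH r₁ 0 u hu_mem hu0
      rw [hwtR, hv0, hw0]
      simp only [add_zero]
      calc Dr (m+1) r₁ 0 ≤ 3 * Dr m r₁ 0 := N1 m r₁ 0
        _ ≤ 3 * (hammingNorm u : ℝ) := by linarith
        _ ≤ _ := by linarith
    · -- r₂ = s + 1
      have hv_mem : v ∈ Kc m (r₁-1) s := by
        rw [hv]
        refine mem_Kc_iff.mpr ⟨fun r' => f (Fin.cons 1 r'), fun r' h => ?_, rfl⟩
        have h2 := hf _ h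
        rw [wt_cons_ne (by decide) r'] at h2
        omega
      have hw_mem : w ∈ Kc m (r₁-1) s := by
        rw [hw]
        refine mem_Kc_iff.mpr ⟨fun r' => f (Fin.cons 2 r'), fun r' h => ?_, rfl⟩
        have h2 := hf _ h
        rw [wt_cons_ne (by decide) r'] at h2
        omega
      have hu_big : u ∈ Kc m (r₁-1) (s+1) := Kc_mono (Nat.sub_le _ _) le_rfl hu_mem
      have hv_big : v ∈ Kc m (r₁-1) (s+1) := Kc_mono le_rfl (Nat.le_succ _) hv_mem
      have hw_big : w ∈ Kc m (r₁-1) (s+1) := Kc_mono le_rfl (Nat.le_succ _) hw_mem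
      have hmid : ∀ z : (Fin m → ZMod 3) → F2,
          z ∈ Kc m r₁ (s+1) → z ∈ Kc m (r₁-1) s → z ∈ Kc m r₁ s := by
        intro z hz1 hz2
        have := Kc_inter hz1 hz2
        rwa [Nat.max_eq_left (Nat.sub_le _ _), Nat.min_eq_right (Nat.le_succ _)] at this
      rw [hwtR]
      by_cases hv0 : v = 0
      · by_cases hw0 : w = 0
        · -- Case 1 : v = w = 0
          have hu0 : u ≠ 0 := fun h => hnz ⟨h, hv0, hw0⟩
          have ihu := IH r₁ (s+1) u hu_mem hu0
          rw [hv0, hw0]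
          simp only [add_zero]
          calc Dr (m+1) r₁ (s+1) ≤ 3 * Dr m r₁ (s+1) := N1 m r₁ (s+1)
            _ ≤ _ := by linarith
        · -- Case 2 : v = 0, w ≠ 0
          have ihw := IH (r₁-1) s w hw_mem hw0
          rw [hv0]
          simp only [add_zero]
          by_cases hu0 : u = 0
          · rw [hu0]
            simp only [zero_add]
            calc Dr (m+1) r₁ (s+1) ≤ 2 * Dr m (r₁-1) s := N2 m r₁ s
              _ ≤ _ := by linarith
          · by_cases huw : u + w = 0
            · have huw' : u = w := eq_of_add_eq_zero huw
              have humid : u ∈ Kc m r₁ s := hmid u hu_mem (huw' ▸ hw_mem)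
              have ihm := IH r₁ s u humid hu0
              rw [huw, hammingNorm_zero]
              have := N3 m r₁ s
              push_cast
              linarith
            · have ihuw := IH (r₁-1) (s+1) (u+w) (Submodule.add_mem _ hu_big hw_big) huw
              have ihu := IH r₁ (s+1) u hu_mem hu0
              have h45 := N45 m r₁ s
              rcases max_le_iff.mp (le_refl (max (Dr m (r₁-1) (s+1) + Dr m (r₁-1) s)
                (Dr m r₁ (s+1) + 2 * Dr m (r₁-1) (s+1)))) with _
              rcases le_max_iff.mp h45 with h | h
              · linarith
              · linarith
      · by_cases hw0 : w = 0
        · -- Case 2' : w = 0, v ≠ 0 (symmetric)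
          have ihv := IH (r₁-1) s v hv_mem hv0
          rw [hw0]
          simp only [add_zero]
          by_cases hu0 : u = 0
          · rw [hu0]
            simp only [zero_add]
            calc Dr (m+1) r₁ (s+1) ≤ 2 * Dr m (r₁-1) s := N2 m r₁ s
              _ ≤ _ := by linarith
          · by_cases huv : u + v = 0
            · have huv' : u = v := eq_of_add_eq_zero huv
              have humid : u ∈ Kc m r₁ s := hmid u hu_mem (huv' ▸ hv_mem)
              have ihm := IH r₁ s u humid hu0
              rw [huv, hammingNorm_zero]
              have := N3 m r₁ s
              push_cast
              linarith
            · have ihuv := IH (r₁-1) (s+1) (u+v) (Submodule.add_mem _ hu_big hv_big) huv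
              have ihu := IH r₁ (s+1) u hu_mem hu0
              have h45 := N45 m r₁ s
              rcases le_max_iff.mp h45 with h | h
              · linarith
              · linarith
        · -- Case 3 : v ≠ 0, w ≠ 0
          have ihv := IH (r₁-1) s v hv_mem hv0
          have ihw := IH (r₁-1) s w hw_mem hw0
          by_cases ha : u + v + w = 0
          · -- a = 0 : blocks are (0, w, v)
            have hb : u + v = w := by
              have : (u + v) + w = 0 := ha
              exact eq_of_add_eq_zero this
            have he : u + w = v := by
              have h1 : (u + w) + v = 0 := by
                rw [← ha]; abel
              exact eq_of_add_eq_zero h1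
            rw [ha, hb, he, hammingNorm_zero]
            calc Dr (m+1) r₁ (s+1) ≤ 2 * Dr m (r₁-1) s := N2 m r₁ s
              _ ≤ _ := by push_cast; linarith
          · by_cases hb : u + v = 0
            · have hb' : u = v := eq_of_add_eq_zero hb
              have ha' : u + v + w = w := by rw [hb, zero_add]
              have he' : u + w = v + w := by rw [hb']
              by_cases hvw : v + w = 0
              · -- u = v = w
                have hvw' : v = w := eq_of_add_eq_zero hvw
                have humid : u ∈ Kc m r₁ s := hmid u hu_mem (hb' ▸ hv_mem)
                have hu0 : u ≠ 0 := fun h => hv0 (hb' ▸ h)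
                have ihm := IH r₁ s u humid hu0
                rw [ha', hb, he', hvw, hammingNorm_zero]
                have := N3 m r₁ s
                have huw2 : hammingNorm w = hammingNorm u := by rw [hb', hvw']
                rw [huw2]
                push_cast
                linarith
              · have ihvw := IH (r₁-1) s (v+w) (Submodule.add_mem _ hv_mem hw_mem) hvw
                rw [ha', hb, he', hammingNorm_zero]
                calc Dr (m+1) r₁ (s+1) ≤ 2 * Dr m (r₁-1) s := N2 m r₁ s
                  _ ≤ _ := by push_cast; linarith
            · by_cases he : u + w = 0
              · have he' : u = w := eq_of_add_eq_zero he
                have ha' : u + v + w = v := by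
                  rw [add_comm u v, add_assoc, ← he']
                  rw [F2_add_self, add_zero]
                have hb' : u + v = w + v := by rw [he']
                by_cases hwv : w + v = 0
                · have huv0 : u + v = 0 := by rw [hb', hwv]
                  exact absurd huv0 hb
                · have ihwv := IH (r₁-1) s (w+v) (Submodule.add_mem _ hw_mem hv_mem) hwv
                  rw [ha', hb', he, hammingNorm_zero]
                  calc Dr (m+1) r₁ (s+1) ≤ 2 * Dr m (r₁-1) s := N2 m r₁ s
                    _ ≤ _ := by push_cast; linarith
              · -- all three blocks nonzero
                have ha_mem : u + v + w ∈ Kc m (r₁-1) (s+1) :=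
                  Submodule.add_mem _ (Submodule.add_mem _ hu_big hv_big) hw_big
                have iha := IH (r₁-1) (s+1) (u+v+w) ha_mem ha
                have ihb := IH (r₁-1) (s+1) (u+v) (Submodule.add_mem _ hu_big hv_big) hb
                have ihe := IH (r₁-1) (s+1) (u+w) (Submodule.add_mem _ hu_big hw_big) he
                by_cases hvw : v + w = 0
                · -- v = w, blocks (u, b, b) with b = u+v
                  have hvw' : v = w := eq_of_add_eq_zero hvw
                  have ihu' : u + v + w = u := by
                    rw [add_assoc, hvw, add_zero]
                  have hu0 : u ≠ 0 := by rw [← ihu']; exact ha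
                  have ihu := IH r₁ (s+1) u hu_mem hu0
                  have heq : hammingNorm (u + w) = hammingNorm (u + v) := by rw [hvw']
                  rw [ihu', heq]
                  have h45 := N45 m r₁ s
                  rcases le_max_iff.mp h45 with h | h
                  · linarith
                  · linarith
                · -- generic case : use N6
                  have ihvw := IH (r₁-1) s (v+w) (Submodule.add_mem _ hv_mem hw_mem) hvw
                  have tvw : (hammingNorm (v+w) : ℝ) ≤ hammingNorm (u+v) + hammingNorm (u+w) := by
                    have h : v + w = (u + v) + (u + w) := by
                      have : (u + v) + (u + w) = (u + u) + (v + w) := by abel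
                      rw [this, F2_add_self, zero_add]
                    calc (hammingNorm (v+w) : ℝ) = hammingNorm ((u+v) + (u+w)) := by rw [← h]
                      _ ≤ _ := by exact_mod_cast wt_triangle (u+v) (u+w)
                  have h6 := N6 m r₁ s
                  rcases le_max_iff.mp h6 with h | h
                  · linarith
                  · linarith


/-! ### Row weights and base facts about `BiD` -/

lemma A3_row_card : ∀ t : ZMod 3,
    (univ.filter fun s : ZMod 3 => A3 t s ≠ 0).card = if t = 0 then 3 else 2 := by decide

lemma wt_le_card {m : ℕ} (r : Fin m → ZMod 3) : hammingNorm r ≤ m := by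
  calc hammingNorm r ≤ (univ : Finset (Fin m)).card := Finset.card_filter_le _ _
    _ = m := by simp

lemma wt_row {m : ℕ} (r : Fin m → ZMod 3) :
    hammingNorm (A3pow m r) = 2^(hammingNorm r) * 3^(m - hammingNorm r) := by
  classical
  have hset : (univ.filter fun x : Fin m → ZMod 3 => A3pow m r x ≠ 0)
      = Fintype.piFinset (fun i => univ.filter fun s : ZMod 3 => A3 (r i) s ≠ 0) := by
    ext x
    simp only [Finset.mem_filter, Finset.mem_univ, true_and, Fintype.mem_piFinset]
    rw [A3pow]
    rw [Finset.prod_ne_zero_iff]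
    simp
  have h1 : hammingNorm (A3pow m r)
      = ∏ i, (univ.filter fun s : ZMod 3 => A3 (r i) s ≠ 0).card := by
    rw [hammingNorm]
    show (univ.filter fun x : Fin m → ZMod 3 => A3pow m r x ≠ 0).card = _
    rw [hset, Fintype.card_piFinset]
  rw [h1]
  have h2 : ∀ i, (univ.filter fun s : ZMod 3 => A3 (r i) s ≠ 0).card
      = if r i ≠ 0 then 2 else 3 := by
    intro i
    rw [A3_row_card (r i)]
    by_cases h : r i = 0 <;> simp [h]
  rw [Finset.prod_congr rfl (fun i _ => h2 i), Finset.prod_ite]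
  rw [Finset.prod_const, Finset.prod_const]
  have h3 : (univ.filter fun i : Fin m => ¬ (r i ≠ 0)).card = m - hammingNorm r := by
    have h := Finset.card_filter_add_card_filter_not
      (s := (univ : Finset (Fin m))) (p := fun i => r i ≠ 0)
    have hm : (univ : Finset (Fin m)).card = m := by simp
    rw [hm] at h
    have h' : hammingNorm r + (univ.filter fun i : Fin m => ¬ (r i ≠ 0)).card = m := h
    omega
  rw [h3]
  rfl

lemma pw_lt {m u w : ℕ} (h : u < w) (hw : w ≤ m) :
    2^w * 3^(m-w) < 2^u * 3^(m-u) := by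
  have hk : w - u ≠ 0 := by omega
  have h2 : (2:ℕ)^(w-u) < 3^(w-u) := Nat.pow_lt_pow_left (by norm_num) hk
  calc 2^w * 3^(m-w) = 2^u * (2^(w-u) * 3^(m-w)) := by
        rw [← mul_assoc, ← pow_add]
        congr 2
        omega
    _ < 2^u * (3^(w-u) * 3^(m-w)) := by
        have hp : 0 < (3:ℕ)^(m-w) := by positivity
        have hq : 0 < (2:ℕ)^u := by positivity
        exact mul_lt_mul_of_pos_left (mul_lt_mul_of_pos_right h2 hp) hq
    _ = 2^u * 3^(m-u) := by
        rw [← pow_add]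
        congr 2
        omega

lemma pw_le {m u w : ℕ} (h : u ≤ w) (hw : w ≤ m) :
    2^w * 3^(m-w) ≤ 2^u * 3^(m-u) := by
  rcases Nat.lt_or_ge u w with h' | h'
  · exact (pw_lt h' hw).le
  · have : u = w := by omega
    rw [this]

lemma BiD_le_Kc {m r₁ r₂ : ℕ} (h1 : r₁ ≤ r₂) (h2 : r₂ ≤ m) :
    BiD m r₁ r₂ ≤ Kc m r₁ r₂ := by
  apply Submodule.span_mono
  rintro x ⟨r, ⟨hlo, hhi⟩, rfl⟩
  rw [wt_row] at hlo hhi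
  refine ⟨r, ⟨?_, ?_⟩, rfl⟩
  · by_contra hcon
    push_neg at hcon
    have := pw_lt hcon (le_trans h1 h2)
    omega
  · by_contra hcon
    push_neg at hcon
    have := pw_lt hcon (wt_le_card r)
    omega

lemma exists_wt (m k : ℕ) (hk : k ≤ m) : ∃ r : Fin m → ZMod 3, hammingNorm r = k := by
  classical
  refine ⟨fun i => if (i:ℕ) < k then 1 else 0, ?_⟩
  have hfe : (univ.filter fun i : Fin m => (if ((i:ℕ) < k) then (1 : ZMod 3) else 0) ≠ 0)
      = univ.filter fun i : Fin m => (i:ℕ) < k := by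
    apply Finset.filter_congr
    intro i _
    split_ifs with h <;> simp [h]
  show (univ.filter fun i : Fin m => (if ((i:ℕ) < k) then (1 : ZMod 3) else 0) ≠ 0).card = k
  rw [hfe]
  apply Finset.card_eq_of_bijective (fun i hi => (⟨i, lt_of_lt_of_le hi hk⟩ : Fin m))
  · intro a ha
    simp only [Finset.mem_filter] at ha
    exact ⟨a, ha.2, by simp⟩
  · intro i hi
    simp [hi]
  · intro i j hi hj hij
    simpa using congrArg Fin.val hij

end Aux

/-- Closed-form lower bound on the minimum distance of `BiD(m,r₁,r₂)`:
`d_min ≥ ⌈max (4^r₁ · 3^(m-r₁-r₂), 3^(m-r₂) · 2^(r₁+r₂-m))⌉` (exponents in `ℤ`). -/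
theorem BiD_minDist_lower_bound (m r₁ r₂ : ℕ) (h1 : r₁ ≤ r₂) (h2 : r₂ ≤ m) :
    ⌈max ((4:ℝ)^(r₁:ℤ) * (3:ℝ)^((m:ℤ) - r₁ - r₂))
        ((3:ℝ)^((m:ℤ) - r₂) * (2:ℝ)^((r₁:ℤ) + r₂ - m))⌉
      ≤ (minDist (BiD m r₁ r₂) : ℤ) := by
  classical
  obtain ⟨r0, hr0⟩ := exists_wt m r₁ (le_trans h1 h2)
  have hrow_wt : hammingNorm (A3pow m r0) = 2^r₁ * 3^(m-r₁) := by rw [wt_row, hr0]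
  have hrow_mem : A3pow m r0 ∈ BiD m r₁ r₂ := by
    apply Submodule.subset_span
    refine ⟨r0, ⟨?_, ?_⟩, rfl⟩
    · rw [hrow_wt]
      exact pw_le h1 h2
    · exact hrow_wt.le
  have hrow_ne : A3pow m r0 ≠ 0 := by
    intro h
    have hz : hammingNorm (A3pow m r0) = 0 := by rw [h, hammingNorm_zero]
    rw [hrow_wt] at hz
    have : 0 < 2^r₁ * 3^(m-r₁) := by positivity
    omega
  have hne : {d : ℕ | ∃ a ∈ BiD m r₁ r₂, a ≠ 0 ∧ hammingNorm a = d}.Nonempty :=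
    ⟨_, ⟨A3pow m r0, hrow_mem, hrow_ne, rfl⟩⟩
  have hmem := Nat.sInf_mem hne
  obtain ⟨b, hbmem, hbne, hbd⟩ := hmem
  have hmain := main_bound m r₁ r₂ b (BiD_le_Kc h1 h2 hbmem) hbne
  rw [Int.ceil_le]
  show Dr m r₁ r₂ ≤ (((minDist (BiD m r₁ r₂) : ℕ) : ℤ) : ℝ)
  have hd : hammingNorm b = minDist (BiD m r₁ r₂) := hbd
  rw [← hd]
  push_cast
  exact hmain
end
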